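/- arXiv:1010.4487 — 8 statements merged into one kernel-verified Lean document; each statement's English description precedes it below -/
import Mathlib

section
/- Let D ⊆ ℂ be an open set, p ∈ D, and let ρ > 0, c > 0. Suppose h : D → D(0,ρ) is a homeomorphism of D onto the open disk D(0,ρ) with h(p) = 0, satisfying c|h(z)| ≤ |z − p| for all z ∈ D. Then the open round disk D(p, ρc) is contained in D. -/
open Metric Set Topology

/-- If `h` is a homeomorphism of an open set `D ⊆ ℂ` onto the open disk
`D(0,ρ)` with `h p = 0` and `c * |h z| ≤ |z - p|` on `D`, then the round disk
`D(p, ρ c)` is contained in `D`. -/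
theorem round_disk_subset_coordinate_disk
    (D : Set ℂ) (hD : IsOpen D) (p : ℂ) (hp : p ∈ D)
    (ρ c : ℝ) (hρ : 0 < ρ) (hc : 0 < c)
    (h g : ℂ → ℂ)
    (hbij : Set.BijOn h D (ball (0 : ℂ) ρ))
    (hcont : ContinuousOn h D)
    (hinv : Set.InvOn g h D (ball (0 : ℂ) ρ))
    (hgcont : ContinuousOn g (ball (0 : ℂ) ρ))
    (h0 : h p = 0)
    (hcomp : ∀ z ∈ D, c * ‖h z‖ ≤ ‖z - p‖) :
    ball p (ρ * c) ⊆ D := by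
  have hpre : IsPreconnected (ball p (ρ * c)) := (convex_ball p (ρ * c)).isPreconnected
  apply hpre.subset_of_closure_inter_subset hD
  · exact ⟨p, mem_ball_self (by positivity), hp⟩
  · rintro z ⟨hzc, hz⟩
    obtain ⟨u, hu, hul⟩ := mem_closure_iff_seq_limit.1 hzc
    set r : ℝ := (‖z - p‖ + ρ * c) / 2 with hrdef
    have hzb : ‖z - p‖ < ρ * c := mem_ball_iff_norm.1 hz
    have hzr : ‖z - p‖ < r := by rw [hrdef]; linarith
    have hrρ : r < ρ * c := by rw [hrdef]; linarith
    have htn : Filter.Tendsto (fun n => ‖u n - p‖) Filter.atTop (𝓝 ‖z - p‖) :=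
      (hul.sub tendsto_const_nhds).norm
    obtain ⟨N, hN⟩ := Filter.eventually_atTop.1 (htn.eventually_lt_const hzr)
    set v : ℕ → ℂ := fun n => u (n + N) with hvdef
    have hvD : ∀ n, v n ∈ D := fun n => hu (n + N)
    have hvK : ∀ n, h (v n) ∈ closedBall (0 : ℂ) (r / c) := by
      intro n
      have h1 : c * ‖h (v n)‖ ≤ ‖v n - p‖ := hcomp _ (hvD n)
      have h2 : ‖v n - p‖ < r := hN (n + N) (Nat.le_add_left N n)
      have : ‖h (v n)‖ ≤ r / c := by
        rw [le_div_iff₀ hc]; nlinarith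
      simpa [mem_closedBall, dist_eq_norm] using this
    have hvl : Filter.Tendsto v Filter.atTop (𝓝 z) :=
      hul.comp (Filter.tendsto_add_atTop_nat N)
    obtain ⟨w, hwK, φ, hφ, hφl⟩ :=
      (isCompact_closedBall (0 : ℂ) (r / c)).tendsto_subseq hvK
    have hwb : w ∈ ball (0 : ℂ) ρ := by
      have h1 : ‖w‖ ≤ r / c := by simpa [mem_closedBall, dist_eq_norm] using hwK
      have h2 : r / c < ρ := (div_lt_iff₀ hc).2 (by linarith)
      exact mem_ball_iff_norm.2 (by simpa using h1.trans_lt h2)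
    have hgw : ContinuousAt g w := hgcont.continuousAt (isOpen_ball.mem_nhds hwb)
    have ht1 : Filter.Tendsto (fun n => g (h (v (φ n)))) Filter.atTop (𝓝 (g w)) :=
      (hgw.tendsto).comp hφl
    have heq : (fun n => g (h (v (φ n)))) = fun n => v (φ n) := by
      funext n; exact hinv.1 (hvD (φ n))
    rw [heq] at ht1
    have ht2 : Filter.Tendsto (fun n => v (φ n)) Filter.atTop (𝓝 z) :=
      hvl.comp hφ.tendsto_atTop
    have hzgw : z = g w := tendsto_nhds_unique ht2 ht1
    obtain ⟨z', hz'D, hz'⟩ := hbij.surjOn hwb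
    have : g w = z' := by rw [← hz']; exact hinv.1 hz'D
    rw [hzgw, this]; exact hz'D
end

section
/- Let V and E be sets, with maps assigning to each edge e ∈ E its starting vertex e⁻ ∈ V and ending vertex e⁺ ∈ V, and for v ∈ V let E_v = {e ∈ E : e⁻ = v or e⁺ = v}. Let σ : V → (0,∞) be a weight and for each edge e set σ(e) = (σ(e⁻) + σ(e⁺))/2. Let k ≥ 1 and assume every vertex v satisfies |E_v| ≤ k. Then for every real p with 1 ≤ p < ∞ and every family (α_e)_{e∈E} of complex numbers, one has (as sums in [0,∞]): Σ_{v∈V} σ(v)^p (Σ_{e∈E_v} |α_e|)^p ≤ 2^p k^{p−1} Σ_{e∈E} σ(e)^p |α_e|^p. -/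
open ENNReal

lemma aux_pow_sum {ι : Type*} (s : Finset ι) (f : ι → ℝ≥0∞) {p : ℝ} (hp : 1 ≤ p) :
    (∑ i ∈ s, f i) ^ p ≤ (s.card : ℝ≥0∞) ^ (p - 1) * ∑ i ∈ s, f i ^ p := by
  rcases s.eq_empty_or_nonempty with rfl | hs
  · simp [ENNReal.zero_rpow_of_pos (lt_of_lt_of_le zero_lt_one hp)]
  · set c : ℝ≥0∞ := (s.card : ℝ≥0∞) with hc
    have hc0 : c ≠ 0 := by simp [hc, hs.card_ne_zero]
    have hct : c ≠ ⊤ := by simp [hc]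
    have hw : ∑ _i ∈ s, c⁻¹ = 1 := by
      rw [Finset.sum_const, nsmul_eq_mul, ← hc, ENNReal.mul_inv_cancel hc0 hct]
    have h := ENNReal.rpow_arith_mean_le_arith_mean_rpow s (fun _ => c⁻¹) f hw hp
    rw [← Finset.mul_sum, ← Finset.mul_sum, ENNReal.mul_rpow_of_nonneg _ _ (by linarith)] at h
    have h2 := mul_le_mul_right h (c ^ p)
    rw [← mul_assoc, ← mul_assoc, ← ENNReal.mul_rpow_of_nonneg _ _ (by linarith : (0:ℝ) ≤ p),
      ENNReal.mul_inv_cancel hc0 hct, ENNReal.one_rpow, one_mul] at h2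
    have h3 : c ^ p * c⁻¹ = c ^ (p - 1) := by
      rw [← ENNReal.rpow_neg_one c, ← ENNReal.rpow_add _ _ hc0 hct]
      ring_nf
    rwa [h3] at h2

/-- weighted `ℓ^p` bound for the operator `(α_e) ↦ (Σ_{e ∈ E_v} |α_e|)_v`,
all sums taken in `[0,∞]`. -/
theorem weighted_lp_vertex_bound
    {V E : Type*} (src dst : E → V)
    (σ : V → ℝ) (hσ : ∀ v, 0 < σ v)
    (k : ℕ) (hk : 1 ≤ k)
    (hfin : ∀ v : V, {e : E | src e = v ∨ dst e = v}.Finite)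
    (hdeg : ∀ v : V, {e : E | src e = v ∨ dst e = v}.ncard ≤ k)
    (p : ℝ) (hp : 1 ≤ p) (α : E → ℂ) :
    ∑' v : V, (ENNReal.ofReal (σ v)) ^ p *
        (∑' e : {e : E // src e = v ∨ dst e = v}, ENNReal.ofReal ‖α e.1‖) ^ p ≤
      ENNReal.ofReal (2 ^ p * (k : ℝ) ^ (p - 1)) *
        ∑' e : E, (ENNReal.ofReal ((σ (src e) + σ (dst e)) / 2)) ^ p *
          (ENNReal.ofReal ‖α e‖) ^ p := by
  classical
  have hp0 : (0:ℝ) ≤ p := by linarith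
  set g : E → ℝ≥0∞ := fun e => ENNReal.ofReal ‖α e‖ with hg
  set w : V → ℝ≥0∞ := fun v => ENNReal.ofReal (σ v) with hw
  set F : V → E → ℝ≥0∞ := fun v e =>
    if src e = v ∨ dst e = v then w v ^ p * g e ^ p else 0 with hF
  -- per-vertex bound
  have step1 : ∀ v : V, w v ^ p *
      (∑' e : {e : E // src e = v ∨ dst e = v}, g e.1) ^ p ≤
      (k : ℝ≥0∞) ^ (p - 1) * ∑' e : E, F v e := by
    intro v
    set s := (hfin v).toFinset with hs
    have hsum : (∑' e : {e : E // src e = v ∨ dst e = v}, g e.1)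
        = ∑ e ∈ s, g e := by
      have h0 : (∑' e : {e : E // src e = v ∨ dst e = v}, g e.1)
          = ∑' e : E, Set.indicator {e : E | src e = v ∨ dst e = v} g e :=
        tsum_subtype _ g
      rw [h0, tsum_eq_sum (s := s) (fun e he => Set.indicator_of_notMem
        (by simpa [hs] using he) g)]
      exact Finset.sum_congr rfl fun e he =>
        Set.indicator_of_mem (by simpa [hs] using he) g
    have hFsum : (∑' e : E, F v e) = ∑ e ∈ s, w v ^ p * g e ^ p := by
      rw [tsum_eq_sum (s := s) (fun e he => by
        simp only [hF]
        rw [if_neg]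
        simpa [hs] using he)]
      refine Finset.sum_congr rfl fun e he => ?_
      simp only [hF]
      rw [if_pos]
      simpa [hs] using he
    have hcard : (s.card : ℝ≥0∞) ≤ (k : ℝ≥0∞) := by
      have : s.card ≤ k := by
        rw [hs, ← Set.ncard_eq_toFinset_card _ (hfin v)]; exact hdeg v
      exact_mod_cast this
    rw [hsum, hFsum]
    calc w v ^ p * (∑ e ∈ s, g e) ^ p
        ≤ w v ^ p * ((s.card : ℝ≥0∞) ^ (p-1) * ∑ e ∈ s, g e ^ p) :=
          mul_le_mul_right (aux_pow_sum s g hp) _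
      _ ≤ w v ^ p * ((k : ℝ≥0∞) ^ (p-1) * ∑ e ∈ s, g e ^ p) :=
          mul_le_mul_right (mul_le_mul_left
            (ENNReal.rpow_le_rpow hcard (by linarith)) _) _
      _ = (k : ℝ≥0∞) ^ (p-1) * ∑ e ∈ s, w v ^ p * g e ^ p := by
          simp only [Finset.mul_sum]
          exact Finset.sum_congr rfl fun e _ => by ring
  -- per-edge bound
  have step2 : ∀ e : E, (∑' v : V, F v e) ≤
      (2:ℝ≥0∞) ^ p * ((ENNReal.ofReal ((σ (src e) + σ (dst e)) / 2)) ^ p * g e ^ p) := by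
    intro e
    have h1 : (∑' v : V, F v e) = ∑ v ∈ ({src e, dst e} : Finset V), F v e := by
      refine tsum_eq_sum fun v hv => ?_
      simp only [Finset.mem_insert, Finset.mem_singleton] at hv
      push_neg at hv
      simp only [hF]
      rw [if_neg]
      rintro (h | h)
      exacts [hv.1 h.symm, hv.2 h.symm]
    have h2 : ∑ v ∈ ({src e, dst e} : Finset V), F v e ≤ F (src e) e + F (dst e) e := by
      by_cases hsd : src e = dst e
      · simp only [hsd, Finset.insert_eq_self.mpr (Finset.mem_singleton_self _),
          Finset.sum_singleton]
        exact le_add_self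
      · rw [Finset.sum_pair hsd]
    have h3 : F (src e) e + F (dst e) e = (w (src e) ^ p + w (dst e) ^ p) * g e ^ p := by
      simp only [hF, if_pos (Or.inl rfl), if_pos (Or.inr rfl)]
      ring
    have h4 : w (src e) ^ p + w (dst e) ^ p ≤ (w (src e) + w (dst e)) ^ p :=
      ENNReal.add_rpow_le_rpow_add _ _ hp
    have h5 : w (src e) + w (dst e)
        = 2 * ENNReal.ofReal ((σ (src e) + σ (dst e)) / 2) := by
      rw [hw]
      rw [← ENNReal.ofReal_add (hσ _).le (hσ _).le, ← ENNReal.ofReal_ofNat 2,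
        ← ENNReal.ofReal_mul (by norm_num)]
      congr 1
      ring
    calc (∑' v : V, F v e) ≤ F (src e) e + F (dst e) e := h1 ▸ h2
      _ = (w (src e) ^ p + w (dst e) ^ p) * g e ^ p := h3
      _ ≤ (w (src e) + w (dst e)) ^ p * g e ^ p := mul_le_mul_left h4 _
      _ = (2:ℝ≥0∞) ^ p * ((ENNReal.ofReal ((σ (src e) + σ (dst e)) / 2)) ^ p * g e ^ p) := by
          rw [h5, ENNReal.mul_rpow_of_nonneg _ _ hp0, mul_assoc]
  -- combine
  have hconst : ENNReal.ofReal (2 ^ p * (k : ℝ) ^ (p - 1))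
      = (2:ℝ≥0∞) ^ p * (k : ℝ≥0∞) ^ (p - 1) := by
    rw [ENNReal.ofReal_mul (Real.rpow_nonneg (by norm_num) p),
      ← ENNReal.ofReal_rpow_of_pos (by norm_num),
      ← ENNReal.ofReal_rpow_of_pos (by exact_mod_cast hk),
      ENNReal.ofReal_ofNat, ENNReal.ofReal_natCast]
  calc ∑' v : V, w v ^ p * (∑' e : {e : E // src e = v ∨ dst e = v}, g e.1) ^ p
      ≤ ∑' v : V, (k : ℝ≥0∞) ^ (p - 1) * ∑' e : E, F v e := ENNReal.tsum_le_tsum step1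
    _ = (k : ℝ≥0∞) ^ (p - 1) * ∑' v : V, ∑' e : E, F v e := ENNReal.tsum_mul_left
    _ = (k : ℝ≥0∞) ^ (p - 1) * ∑' e : E, ∑' v : V, F v e := by rw [ENNReal.tsum_comm]
    _ ≤ (k : ℝ≥0∞) ^ (p - 1) * ∑' e : E, (2:ℝ≥0∞) ^ p *
          ((ENNReal.ofReal ((σ (src e) + σ (dst e)) / 2)) ^ p * g e ^ p) :=
        mul_le_mul_right (ENNReal.tsum_le_tsum step2) _
    _ = ENNReal.ofReal (2 ^ p * (k : ℝ) ^ (p - 1)) *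
        ∑' e : E, (ENNReal.ofReal ((σ (src e) + σ (dst e)) / 2)) ^ p * g e ^ p := by
        rw [ENNReal.tsum_mul_left, hconst]
        ring
end

section
/- Let V and E be sets, with maps assigning to each edge e ∈ E its starting vertex e⁻ ∈ V and ending vertex e⁺ ∈ V. Let σ : V → (0,∞) be a weight and for each edge e set σ(e) = (σ(e⁻) + σ(e⁺))/2. Let k ≥ 1 and assume: (i) every vertex v is an endpoint of at most k edges, where a loop at v is counted twice; (ii) for every edge e, σ(e⁻) ≤ k σ(e⁺) and σ(e⁺) ≤ k σ(e⁻). Then for every real p with 1 ≤ p < ∞ and every family (u_v)_{v∈V} of complex numbers, one has (as sums in [0,∞]): Σ_{e∈E} σ(e)^p (|u_{e⁻}| + |u_{e⁺}|)^p ≤ (k(1+k)^p/2) Σ_{v∈V} σ(v)^p |u_v|^p. -/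
open ENNReal

lemma tsum_comp_eq_ncard {V E : Type*} (f : E → V) (g : V → ℝ≥0∞)
    (hfin : ∀ v, {e : E | f e = v}.Finite) :
    ∑' e : E, g (f e) = ∑' v : V, ({e : E | f e = v}.ncard : ℝ≥0∞) * g v := by
  calc ∑' e : E, g (f e)
      = ∑' x : (Σ v : V, {e : E // f e = v}), g (f x.2) :=
        ((Equiv.sigmaFiberEquiv f).tsum_eq fun e => g (f e)).symm
    _ = ∑' (v : V) (e : {e : E // f e = v}), g (f (e : E)) := ENNReal.tsum_sigma' _
    _ = ∑' (v : V), ({e : E | f e = v}.ncard : ℝ≥0∞) * g v := by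
        refine tsum_congr fun v => ?_
        have h1 : ∀ e : {e : E // f e = v}, g (f (e : E)) = g v := fun e => by rw [e.2]
        calc ∑' (e : {e : E // f e = v}), g (f (e : E))
            = ∑' (_ : {e : E | f e = v}), g v := tsum_congr h1
          _ = {e : E | f e = v}.encard * g v := ENNReal.tsum_set_const _ _
          _ = ({e : E | f e = v}.ncard : ℝ≥0∞) * g v := by
              rw [← (hfin v).cast_ncard_eq]; simp

lemma edge_term_bound (a b x y : ℝ≥0∞) (k : ℕ) {p : ℝ} (hp : 1 ≤ p)
    (hab : a + b ≤ (1 + (k : ℝ≥0∞)) * a) (hba : a + b ≤ (1 + (k : ℝ≥0∞)) * b) :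
    ((a + b) / 2 * (x + y)) ^ p ≤
      (1 + (k : ℝ≥0∞)) ^ p * 2⁻¹ * (a ^ p * x ^ p + b ^ p * y ^ p) := by
  have h0p : 0 ≤ p := le_trans zero_le_one hp
  have key : (a + b) / 2 * (x + y) ≤ (1 + (k : ℝ≥0∞)) * (2⁻¹ * (a * x) + 2⁻¹ * (b * y)) := by
    calc (a + b) / 2 * (x + y) = 2⁻¹ * ((a + b) * x + (a + b) * y) := by
          rw [ENNReal.div_eq_inv_mul]; ring
      _ ≤ 2⁻¹ * ((1 + (k : ℝ≥0∞)) * a * x + (1 + (k : ℝ≥0∞)) * b * y) := by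
          gcongr
      _ = (1 + (k : ℝ≥0∞)) * (2⁻¹ * (a * x) + 2⁻¹ * (b * y)) := by ring
  calc ((a + b) / 2 * (x + y)) ^ p
      ≤ ((1 + (k : ℝ≥0∞)) * (2⁻¹ * (a * x) + 2⁻¹ * (b * y))) ^ p :=
        ENNReal.rpow_le_rpow key h0p
    _ = (1 + (k : ℝ≥0∞)) ^ p * (2⁻¹ * (a * x) + 2⁻¹ * (b * y)) ^ p :=
        ENNReal.mul_rpow_of_nonneg _ _ h0p
    _ ≤ (1 + (k : ℝ≥0∞)) ^ p * (2⁻¹ * (a * x) ^ p + 2⁻¹ * (b * y) ^ p) := by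
        gcongr
        exact ENNReal.rpow_arith_mean_le_arith_mean2_rpow 2⁻¹ 2⁻¹ (a * x) (b * y)
          (by rw [← two_mul, ENNReal.mul_inv_cancel two_ne_zero ENNReal.ofNat_ne_top]) hp
    _ = (1 + (k : ℝ≥0∞)) ^ p * 2⁻¹ * (a ^ p * x ^ p + b ^ p * y ^ p) := by
        rw [ENNReal.mul_rpow_of_nonneg a x h0p, ENNReal.mul_rpow_of_nonneg b y h0p]
        ring

/-- weighted `ℓ^p` bound for the operator `(u_v) ↦ (|u_{e⁻}| + |u_{e⁺}|)_e`,
all sums taken in `[0,∞]`.  A loop at `v` is counted twice in the degree bound. -/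
theorem weighted_lp_edge_bound
    {V E : Type*} (src dst : E → V)
    (σ : V → ℝ) (hσ : ∀ v, 0 < σ v)
    (k : ℕ) (hk : 1 ≤ k)
    (hfin₁ : ∀ v : V, {e : E | src e = v}.Finite)
    (hfin₂ : ∀ v : V, {e : E | dst e = v}.Finite)
    (hdeg : ∀ v : V, {e : E | src e = v}.ncard + {e : E | dst e = v}.ncard ≤ k)
    (hcomp : ∀ e : E, σ (src e) ≤ k * σ (dst e) ∧ σ (dst e) ≤ k * σ (src e))
    (p : ℝ) (hp : 1 ≤ p) (u : V → ℂ) :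
    ∑' e : E, (ENNReal.ofReal ((σ (src e) + σ (dst e)) / 2)) ^ p *
        (ENNReal.ofReal (‖u (src e)‖ + ‖u (dst e)‖)) ^ p ≤
      ENNReal.ofReal ((k : ℝ) * (1 + k) ^ p / 2) *
        ∑' v : V, (ENNReal.ofReal (σ v)) ^ p * (ENNReal.ofReal ‖u v‖) ^ p := by
  have h0p : 0 ≤ p := le_trans zero_le_one hp
  set F : V → ℝ≥0∞ := fun v => (ENNReal.ofReal (σ v)) ^ p * (ENNReal.ofReal ‖u v‖) ^ p with hF
  set C : ℝ≥0∞ := (1 + (k : ℝ≥0∞)) ^ p * 2⁻¹ with hC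
  -- per-edge bound
  have hedge : ∀ e : E,
      (ENNReal.ofReal ((σ (src e) + σ (dst e)) / 2)) ^ p *
        (ENNReal.ofReal (‖u (src e)‖ + ‖u (dst e)‖)) ^ p ≤
      C * (F (src e) + F (dst e)) := by
    intro e
    set a := ENNReal.ofReal (σ (src e))
    set b := ENNReal.ofReal (σ (dst e))
    set x := ENNReal.ofReal ‖u (src e)‖
    set y := ENNReal.ofReal ‖u (dst e)‖
    have hab : a + b ≤ (1 + (k : ℝ≥0∞)) * a := by
      rw [add_mul, one_mul]
      gcongr
      calc b ≤ ENNReal.ofReal ((k : ℝ) * σ (src e)) :=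
            ENNReal.ofReal_le_ofReal (hcomp e).2
        _ = (k : ℝ≥0∞) * a := by
            rw [ENNReal.ofReal_mul (by positivity), ENNReal.ofReal_natCast]
    have hba : a + b ≤ (1 + (k : ℝ≥0∞)) * b := by
      rw [add_mul, one_mul, add_comm a b]
      gcongr
      calc a ≤ ENNReal.ofReal ((k : ℝ) * σ (dst e)) :=
            ENNReal.ofReal_le_ofReal (hcomp e).1
        _ = (k : ℝ≥0∞) * b := by
            rw [ENNReal.ofReal_mul (by positivity), ENNReal.ofReal_natCast]
    have h1 : ENNReal.ofReal ((σ (src e) + σ (dst e)) / 2) = (a + b) / 2 := by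
      rw [ENNReal.ofReal_div_of_pos (by norm_num), ENNReal.ofReal_add (hσ _).le (hσ _).le]
      norm_num
      rfl
    have h2 : ENNReal.ofReal (‖u (src e)‖ + ‖u (dst e)‖) = x + y :=
      ENNReal.ofReal_add (norm_nonneg _) (norm_nonneg _)
    rw [h1, h2, ← ENNReal.mul_rpow_of_nonneg _ _ h0p]
    exact edge_term_bound a b x y k hp hab hba
  calc ∑' e : E, (ENNReal.ofReal ((σ (src e) + σ (dst e)) / 2)) ^ p *
        (ENNReal.ofReal (‖u (src e)‖ + ‖u (dst e)‖)) ^ p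
      ≤ ∑' e : E, C * (F (src e) + F (dst e)) := ENNReal.tsum_le_tsum hedge
    _ = C * ((∑' e : E, F (src e)) + ∑' e : E, F (dst e)) := by
        rw [ENNReal.tsum_mul_left, ENNReal.tsum_add]
    _ = C * ((∑' v : V, ({e : E | src e = v}.ncard : ℝ≥0∞) * F v) +
          ∑' v : V, ({e : E | dst e = v}.ncard : ℝ≥0∞) * F v) := by
        rw [tsum_comp_eq_ncard src F hfin₁, tsum_comp_eq_ncard dst F hfin₂]
    _ = C * ∑' v : V, (({e : E | src e = v}.ncard : ℝ≥0∞) +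
          ({e : E | dst e = v}.ncard : ℝ≥0∞)) * F v := by
        rw [← ENNReal.tsum_add]
        congr 1
        exact tsum_congr fun v => by ring
    _ ≤ C * ∑' v : V, (k : ℝ≥0∞) * F v := by
        gcongr with v
        rw [← Nat.cast_add]
        exact_mod_cast Nat.cast_le.mpr (hdeg v)
    _ = (k : ℝ≥0∞) * C * ∑' v : V, F v := by
        rw [ENNReal.tsum_mul_left]; ring
    _ = ENNReal.ofReal ((k : ℝ) * (1 + k) ^ p / 2) * ∑' v : V, F v := by
        congr 1
        rw [ENNReal.ofReal_div_of_pos (by norm_num),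
          ENNReal.ofReal_mul (by positivity),
          ← ENNReal.ofReal_rpow_of_pos (by positivity),
          ENNReal.ofReal_add zero_le_one (by positivity),
          ENNReal.ofReal_natCast, ENNReal.ofReal_one, hC]
        norm_num [ENNReal.div_eq_inv_mul]
        ring
end

section
/- Let R > 0, C₀ ≥ 0, and let (d_n)_{n∈ℕ} be a sequence of natural numbers bounded by some d₀. For each n let F_n be a complex Banach space and let f_n be a function from ℂ^{d_n} (with the supremum norm) to F_n which is Fréchet ℂ-differentiable on the open polydisk P_n = {x ∈ ℂ^{d_n} : max_i |x_i| < R} and satisfies ‖f_n(x)‖ ≤ C₀ for all x ∈ P_n. Let E be the Banach space of bounded sequences x = (x_n)_n with x_n ∈ ℂ^{d_n}, normed by ‖x‖ = sup_n max_i |(x_n)_i|, and let F be the Banach space of bounded sequences y = (y_n)_n with y_n ∈ F_n, normed by ‖y‖ = sup_n ‖y_n‖. Then the map f : x ↦ (f_n(x_n))_{n∈ℕ} sends the open ball {x ∈ E : ‖x‖ < R} into F and is Fréchet ℂ-differentiable at every point x of this ball, with differential df(x)(h) = (df_n(x_n)(h_n))_{n∈ℕ}. -/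
open Metric
open scoped ENNReal

section Aux

variable {E' G : Type*} [NormedAddCommGroup E'] [NormedSpace ℂ E']
  [NormedAddCommGroup G] [NormedSpace ℂ G]

/-- Restriction of a bounded holomorphic map to a complex line through `y`. -/
lemma aux_line {f : E' → G} {R C₀ : ℝ}
    (hdiff : DifferentiableOn ℂ f (ball 0 R))
    (hbdd : ∀ z ∈ ball (0 : E') R, ‖f z‖ ≤ C₀)
    {y : E'} (hy : ‖y‖ < R) {u : E'} (hu : u ≠ 0) :
    DifferentiableOn ℂ (fun z : ℂ => f (y + z • u)) (ball 0 ((R - ‖y‖) / ‖u‖)) ∧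
    (∀ z ∈ ball (0 : ℂ) ((R - ‖y‖) / ‖u‖), ‖f (y + z • u)‖ ≤ C₀) ∧
    HasDerivAt (fun z : ℂ => f (y + z • u)) (fderiv ℂ f y u) 0 := by
  have hu0 : 0 < ‖u‖ := norm_pos_iff.mpr hu
  have hRy : 0 < R - ‖y‖ := sub_pos.mpr hy
  have hρ : 0 < (R - ‖y‖) / ‖u‖ := div_pos hRy hu0
  have hmaps : ∀ z : ℂ, z ∈ ball (0 : ℂ) ((R - ‖y‖) / ‖u‖) → y + z • u ∈ ball (0 : E') R := by
    intro z hz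
    rw [mem_ball_zero_iff] at hz ⊢
    calc ‖y + z • u‖ ≤ ‖y‖ + ‖z • u‖ := norm_add_le _ _
      _ = ‖y‖ + ‖z‖ * ‖u‖ := by rw [norm_smul]
      _ < ‖y‖ + ((R - ‖y‖) / ‖u‖) * ‖u‖ := by
          gcongr
      _ = R := by field_simp; ring
  have hline : Differentiable ℂ (fun z : ℂ => y + z • u) :=
    ((differentiable_id).smul_const u).const_add y
  refine ⟨hdiff.comp hline.differentiableOn hmaps, fun z hz => hbdd _ (hmaps z hz), ?_⟩
  have hf_at : DifferentiableAt ℂ f y :=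
    hdiff.differentiableAt (isOpen_ball.mem_nhds (mem_ball_zero_iff.mpr hy))
  have hline0 : HasDerivAt (fun z : ℂ => y + z • u) u 0 := by
    simpa using ((hasDerivAt_id (0 : ℂ)).smul_const u).const_add y
  have hf_at' : HasFDerivAt f (fderiv ℂ f y) (y + (0 : ℂ) • u) := by
    simpa using hf_at.hasFDerivAt
  have := hf_at'.comp_hasDerivAt 0 hline0
  exact this

/-- Cauchy/Schwarz-type estimate for the derivative of a bounded holomorphic map. -/
lemma aux_fderiv_bound {f : E' → G} {R C₀ : ℝ} (hC₀ : 0 ≤ C₀)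
    (hdiff : DifferentiableOn ℂ f (ball 0 R))
    (hbdd : ∀ z ∈ ball (0 : E') R, ‖f z‖ ≤ C₀)
    {y : E'} (hy : ‖y‖ < R) (u : E') :
    ‖fderiv ℂ f y u‖ ≤ (2 * C₀ + 1) / (R - ‖y‖) * ‖u‖ := by
  have hRy : 0 < R - ‖y‖ := sub_pos.mpr hy
  rcases eq_or_ne u 0 with rfl | hu
  · simp [mul_nonneg, div_nonneg (by linarith : (0:ℝ) ≤ 2 * C₀ + 1) hRy.le]
  have hu0 : 0 < ‖u‖ := norm_pos_iff.mpr hu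
  obtain ⟨hg, hb, hder⟩ := aux_line hdiff hbdd hy hu
  set ρ : ℝ := (R - ‖y‖) / ‖u‖ with hρdef
  have hρ : 0 < ρ := div_pos hRy hu0
  set g : ℂ → G := fun z : ℂ => f (y + z • u) with hgdef
  have hmaps : Set.MapsTo g (ball 0 ρ) (ball (g 0) (2 * C₀ + 1)) := by
    intro z hz
    rw [mem_ball]
    calc dist (g z) (g 0) ≤ ‖g z‖ + ‖g 0‖ := dist_le_norm_add_norm _ _
      _ ≤ C₀ + C₀ := add_le_add (hb z hz) (hb 0 (mem_ball_self hρ))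
      _ < 2 * C₀ + 1 := by linarith
  have hschwarz := Complex.norm_dslope_le_div_of_mapsTo_ball hg (hmaps.mono_right ball_subset_closedBall) (mem_ball_self hρ)
  rw [dslope_same] at hschwarz
  have hderiv : deriv g 0 = fderiv ℂ f y u := hder.deriv
  rw [hderiv] at hschwarz
  calc ‖fderiv ℂ f y u‖ ≤ (2 * C₀ + 1) / ρ := hschwarz
    _ = (2 * C₀ + 1) / (R - ‖y‖) * ‖u‖ := by
        rw [hρdef]; field_simp

/-- Quadratic estimate for the first-order Taylor remainder of a bounded holomorphic map,
obtained by applying the Schwarz lemma twice. -/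
lemma aux_remainder [CompleteSpace G] {f : E' → G} {R C₀ : ℝ} (hC₀ : 0 ≤ C₀)
    (hdiff : DifferentiableOn ℂ f (ball 0 R))
    (hbdd : ∀ z ∈ ball (0 : E') R, ‖f z‖ ≤ C₀)
    {y : E'} (hy : ‖y‖ < R) {u : E'} (hu : u ≠ 0) (hu' : ‖u‖ < R - ‖y‖)
    {ε : ℝ} (hε : 0 < ε) :
    ‖f (y + u) - f y - fderiv ℂ f y u‖ ≤
      (2 * (2 * C₀ + 1) * ‖u‖ / (R - ‖y‖) ^ 2 + ε / (R - ‖y‖)) * ‖u‖ := by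
  have hRy : 0 < R - ‖y‖ := sub_pos.mpr hy
  have hu0 : 0 < ‖u‖ := norm_pos_iff.mpr hu
  obtain ⟨hg, hb, hder⟩ := aux_line hdiff hbdd hy hu
  set ρ : ℝ := (R - ‖y‖) / ‖u‖ with hρdef
  have hρ : 0 < ρ := div_pos hRy hu0
  have hρ1 : 1 < ρ := (one_lt_div hu0).mpr hu'
  set g : ℂ → G := fun z : ℂ => f (y + z • u) with hgdef
  -- first application of Schwarz: bound on `dslope g 0`
  have hmaps : Set.MapsTo g (ball 0 ρ) (ball (g 0) (2 * C₀ + 1)) := by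
    intro z hz
    rw [mem_ball]
    calc dist (g z) (g 0) ≤ ‖g z‖ + ‖g 0‖ := dist_le_norm_add_norm _ _
      _ ≤ C₀ + C₀ := add_le_add (hb z hz) (hb 0 (mem_ball_self hρ))
      _ < 2 * C₀ + 1 := by linarith
  set g₁ : ℂ → G := dslope g 0 with hg₁def
  have hA : ∀ z ∈ ball (0 : ℂ) ρ, ‖g₁ z‖ ≤ (2 * C₀ + 1) / ρ := fun z hz =>
    Complex.norm_dslope_le_div_of_mapsTo_ball hg (hmaps.mono_right ball_subset_closedBall) hz
  have hg₁ : DifferentiableOn ℂ g₁ (ball 0 ρ) :=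
    (Complex.differentiableOn_dslope (isOpen_ball.mem_nhds (mem_ball_self hρ))).mpr hg
  set A : ℝ := (2 * C₀ + 1) / ρ with hAdef
  have hA0 : 0 ≤ A := div_nonneg (by linarith) hρ.le
  have hmaps₁ : Set.MapsTo g₁ (ball 0 ρ) (ball (g₁ 0) (2 * A + ε)) := by
    intro z hz
    rw [mem_ball]
    calc dist (g₁ z) (g₁ 0) ≤ ‖g₁ z‖ + ‖g₁ 0‖ := dist_le_norm_add_norm _ _
      _ ≤ A + A := add_le_add (hA z hz) (hA 0 (mem_ball_self hρ))
      _ < 2 * A + ε := by linarith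
  have h1 : (1 : ℂ) ∈ ball (0 : ℂ) ρ := by
    rw [mem_ball_zero_iff]; simpa using hρ1
  have hschwarz := Complex.norm_dslope_le_div_of_mapsTo_ball hg₁ (hmaps₁.mono_right ball_subset_closedBall) h1
  -- identify `dslope g₁ 0 1` with the Taylor remainder
  have hg₁1 : g₁ 1 = f (y + u) - f y := by
    rw [hg₁def, dslope_of_ne _ (one_ne_zero), slope_def_module]
    simp [hgdef]
  have hg₁0 : g₁ 0 = fderiv ℂ f y u := by
    rw [hg₁def, dslope_same]
    exact hder.deriv
  have hdsl : dslope g₁ 0 1 = f (y + u) - f y - fderiv ℂ f y u := by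
    rw [dslope_of_ne _ (one_ne_zero), slope_def_module, hg₁1, hg₁0]
    simp
  rw [hdsl] at hschwarz
  calc ‖f (y + u) - f y - fderiv ℂ f y u‖ ≤ (2 * A + ε) / ρ := hschwarz
    _ = (2 * (2 * C₀ + 1) * ‖u‖ / (R - ‖y‖) ^ 2 + ε / (R - ‖y‖)) * ‖u‖ := by
        rw [hAdef, hρdef]; field_simp

end Aux

set_option maxHeartbeats 1000000 in
set_option synthInstance.maxHeartbeats 400000 in
/-- a uniformly bounded family of holomorphic maps `f_n` on polydisks of
radius `R` (in uniformly bounded dimensions `d n ≤ d₀`) induces, on the `ℓ^∞` products,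
a map `x ↦ (f_n (x_n))_n` which sends the open ball of radius `R` into the `ℓ^∞`
product of the targets and is Fréchet `ℂ`-differentiable there, with differential
`h ↦ (df_n(x_n)(h_n))_n`. -/
theorem linfty_product_of_bounded_holomorphic_is_differentiable
    (R C₀ : ℝ) (hR : 0 < R) (hC₀ : 0 ≤ C₀)
    (d : ℕ → ℕ) (d₀ : ℕ) (hd : ∀ n, d n ≤ d₀)
    (F : ℕ → Type) [∀ n, NormedAddCommGroup (F n)] [∀ n, NormedSpace ℂ (F n)]
    [∀ n, CompleteSpace (F n)]
    (f : ∀ n, (Fin (d n) → ℂ) → F n)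
    (hdiff : ∀ n, DifferentiableOn ℂ (f n) (ball (0 : Fin (d n) → ℂ) R))
    (hbdd : ∀ n, ∀ x ∈ ball (0 : Fin (d n) → ℂ) R, ‖f n x‖ ≤ C₀) :
    ∃ Φ : lp (fun n => Fin (d n) → ℂ) ∞ → lp F ∞,
      (∀ x : lp (fun n => Fin (d n) → ℂ) ∞, ‖x‖ < R →
        ∀ n : ℕ, (Φ x : ∀ n, F n) n = f n (x n)) ∧
      (∀ x : lp (fun n => Fin (d n) → ℂ) ∞, ‖x‖ < R →
        ∃ L : lp (fun n => Fin (d n) → ℂ) ∞ →L[ℂ] lp F ∞,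
          HasFDerivAt Φ L x ∧
          ∀ h : lp (fun n => Fin (d n) → ℂ) ∞, ∀ n : ℕ,
            (L h : ∀ n, F n) n = fderiv ℂ (f n) (x n) (h n)) := by
  classical
  -- componentwise norm bounds
  have hcomp : ∀ (x : lp (fun n => Fin (d n) → ℂ) ∞) (n : ℕ), ‖x n‖ ≤ ‖x‖ := fun x n =>
    lp.norm_apply_le_norm ENNReal.top_ne_zero x n
  have hballmem : ∀ (x : lp (fun n => Fin (d n) → ℂ) ∞), ‖x‖ < R → ∀ n, (x n) ∈ ball (0 : Fin (d n) → ℂ) R := by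
    intro x hx n
    rw [mem_ball_zero_iff]
    exact lt_of_le_of_lt (hcomp x n) hx
  -- membership of the image sequence in `lp F ∞`
  have hmem : ∀ (x : lp (fun n => Fin (d n) → ℂ) ∞), ‖x‖ < R → Memℓp (fun n => f n (x n)) ∞ := by
    intro x hx
    apply memℓp_infty
    refine ⟨C₀, ?_⟩
    rintro t ⟨n, rfl⟩
    exact hbdd n _ (hballmem x hx n)
  -- the map Φ
  refine ⟨fun x => if hx : ‖x‖ < R then (⟨fun n => f n (x n), hmem x hx⟩ : lp F ∞) else 0,
    ?_, ?_⟩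
  · intro x hx n
    simp only [dif_pos hx]
  -- differentiability
  intro x hx
  have hRx : 0 < R - ‖x‖ := sub_pos.mpr hx
  set M : ℝ := (2 * C₀ + 1) / (R - ‖x‖) with hMdef
  have hM0 : 0 ≤ M := div_nonneg (by linarith) hRx.le
  -- uniform bound on the componentwise derivatives
  have hDbound : ∀ (n : ℕ) (u : Fin (d n) → ℂ),
      ‖fderiv ℂ (f n) (x n) u‖ ≤ M * ‖u‖ := by
    intro n u
    have hxn : ‖x n‖ < R := mem_ball_zero_iff.mp (hballmem x hx n)
    calc ‖fderiv ℂ (f n) (x n) u‖ ≤ (2 * C₀ + 1) / (R - ‖x n‖) * ‖u‖ :=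
          aux_fderiv_bound hC₀ (hdiff n) (hbdd n) hxn u
      _ ≤ M * ‖u‖ := by
          rw [hMdef]
          apply mul_le_mul_of_nonneg_right _ (norm_nonneg u)
          apply div_le_div_of_nonneg_left (by linarith) hRx
          have := hcomp x n; linarith
  have hDmem : ∀ h : lp (fun n => Fin (d n) → ℂ) ∞, Memℓp (fun n => fderiv ℂ (f n) (x n) (h n)) ∞ := by
    intro h
    apply memℓp_infty
    refine ⟨M * ‖h‖, ?_⟩
    rintro t ⟨n, rfl⟩
    exact le_trans (hDbound n (h n)) (mul_le_mul_of_nonneg_left (hcomp h n) hM0)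
  -- the candidate differential, as a linear map
  set Llin : lp (fun n => Fin (d n) → ℂ) ∞ →ₗ[ℂ] lp F ∞ :=
    { toFun := fun h => (⟨fun n => fderiv ℂ (f n) (x n) (h n), hDmem h⟩ : lp F ∞)
      map_add' := by
        intro a b
        apply lp.ext
        funext n
        have h1 : ((a + b : lp (fun n => Fin (d n) → ℂ) ∞) : ∀ n, Fin (d n) → ℂ) n = a n + b n := by
          rw [lp.coeFn_add]; rfl
        have h2 : ∀ (v w : lp F ∞), ((v + w : lp F ∞) : ∀ n, F n) n = v n + w n := by
          intro v w; rw [lp.coeFn_add]; rfl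
        rw [h2]
        show fderiv ℂ (f n) (x n) ((a + b : lp (fun n => Fin (d n) → ℂ) ∞) n)
          = fderiv ℂ (f n) (x n) (a n) + fderiv ℂ (f n) (x n) (b n)
        rw [h1, map_add]
      map_smul' := by
        intro c a
        apply lp.ext
        funext n
        have h1 : ((c • a : lp (fun n => Fin (d n) → ℂ) ∞) : ∀ n, Fin (d n) → ℂ) n = c • a n := by
          rw [lp.coeFn_smul]; rfl
        have h2 : ∀ (v : lp F ∞), ((c • v : lp F ∞) : ∀ n, F n) n = c • (v n) := by
          intro v; rw [lp.coeFn_smul]; rfl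
        simp only [RingHom.id_apply]
        rw [h2]
        show fderiv ℂ (f n) (x n) ((c • a : lp (fun n => Fin (d n) → ℂ) ∞) n)
          = c • fderiv ℂ (f n) (x n) (a n)
        rw [h1, map_smul] } with hLlindef
  have hLlin_apply : ∀ (h : lp (fun n => Fin (d n) → ℂ) ∞) (n : ℕ),
      (Llin h : ∀ n, F n) n = fderiv ℂ (f n) (x n) (h n) := fun h n => rfl
  have hLbound : ∀ h : lp (fun n => Fin (d n) → ℂ) ∞, ‖Llin h‖ ≤ M * ‖h‖ := by
    intro h
    apply lp.norm_le_of_forall_le (mul_nonneg hM0 (norm_nonneg h))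
    intro n
    rw [hLlin_apply]
    exact le_trans (hDbound n (h n)) (mul_le_mul_of_nonneg_left (hcomp h n) hM0)
  set L : lp (fun n => Fin (d n) → ℂ) ∞ →L[ℂ] lp F ∞ := Llin.mkContinuous M hLbound with hLdef
  refine ⟨L, ?_, fun h n => rfl⟩
  -- now prove HasFDerivAt
  rw [hasFDerivAt_iff_isLittleO_nhds_zero]
  rw [Asymptotics.isLittleO_iff]
  intro c hc
  have hδpos : 0 < min ((R - ‖x‖) / 2) (c * (R - ‖x‖) ^ 2 / (4 * (2 * C₀ + 1))) := by
    apply lt_min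
    · linarith
    · positivity
  rw [Metric.eventually_nhds_iff]
  refine ⟨min ((R - ‖x‖) / 2) (c * (R - ‖x‖) ^ 2 / (4 * (2 * C₀ + 1))), hδpos, ?_⟩
  intro h hhδ
  rw [dist_zero_right] at hhδ
  have hh1 : ‖h‖ < (R - ‖x‖) / 2 := lt_of_lt_of_le hhδ (min_le_left _ _)
  have hh2 : ‖h‖ < c * (R - ‖x‖) ^ 2 / (4 * (2 * C₀ + 1)) :=
    lt_of_lt_of_le hhδ (min_le_right _ _)
  have hxh : ‖x + h‖ < R := by
    calc ‖x + h‖ ≤ ‖x‖ + ‖h‖ := norm_add_le _ _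
      _ < ‖x‖ + (R - ‖x‖) / 2 := by linarith
      _ < R := by linarith
  -- identify the components of the difference
  have hkey : ∀ n : ℕ,
      (((if hz : ‖x + h‖ < R
          then (⟨fun n => f n ((x + h) n), hmem _ hz⟩ : lp F ∞) else 0) -
        (if hz : ‖x‖ < R
          then (⟨fun n => f n (x n), hmem _ hz⟩ : lp F ∞) else 0) -
        L h : lp F ∞) : ∀ n, F n) n
      = f n (x n + h n) - f n (x n) - fderiv ℂ (f n) (x n) (h n) := by
    intro n
    rw [lp.coeFn_sub, lp.coeFn_sub]
    simp only [Pi.sub_apply]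
    rw [dif_pos hxh, dif_pos hx]
    have hxhn : ((x + h : lp (fun n => Fin (d n) → ℂ) ∞) : ∀ n, Fin (d n) → ℂ) n
        = x n + h n := by rw [lp.coeFn_add]; rfl
    show f n ((x + h : lp (fun n => Fin (d n) → ℂ) ∞) n) - f n (x n)
        - fderiv ℂ (f n) (x n) (h n) = _
    rw [hxhn]
  -- componentwise remainder bound
  have hbound : ∀ n : ℕ,
      ‖f n (x n + h n) - f n (x n) - fderiv ℂ (f n) (x n) (h n)‖ ≤ c * ‖h‖ := by
    intro n
    have hxn : ‖x n‖ < R := mem_ball_zero_iff.mp (hballmem x hx n)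
    have hRxn : R - ‖x‖ ≤ R - ‖x n‖ := by
      have := hcomp x n; linarith
    rcases eq_or_ne (h n) 0 with h0 | h0
    · rw [h0]
      simp [mul_nonneg hc.le (norm_nonneg h)]
    · have hhn : ‖h n‖ < R - ‖x n‖ := by
        calc ‖h n‖ ≤ ‖h‖ := hcomp h n
          _ < (R - ‖x‖) / 2 := hh1
          _ < R - ‖x‖ := by linarith
          _ ≤ R - ‖x n‖ := hRxn
      have hε : (0 : ℝ) < c * (R - ‖x‖) / 2 := by positivity
      have := aux_remainder hC₀ (hdiff n) (hbdd n) hxn h0 hhn hε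
      calc ‖f n (x n + h n) - f n (x n) - fderiv ℂ (f n) (x n) (h n)‖
          ≤ (2 * (2 * C₀ + 1) * ‖h n‖ / (R - ‖x n‖) ^ 2
              + (c * (R - ‖x‖) / 2) / (R - ‖x n‖)) * ‖h n‖ := this
        _ ≤ (2 * (2 * C₀ + 1) * ‖h‖ / (R - ‖x‖) ^ 2
              + (c * (R - ‖x‖) / 2) / (R - ‖x‖)) * ‖h‖ := by
            have hRxn0 : 0 < R - ‖x n‖ := sub_pos.mpr hxn
            have hhn' : ‖h n‖ ≤ ‖h‖ := hcomp h n
            apply mul_le_mul _ hhn' (norm_nonneg _)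
            · apply add_nonneg <;> positivity
            apply add_le_add
            · apply div_le_div₀ (by positivity)
                (by apply mul_le_mul_of_nonneg_left hhn' (by positivity))
                (by positivity) (pow_le_pow_left₀ hRx.le hRxn 2)
            · exact div_le_div_of_nonneg_left (by positivity) hRx hRxn
        _ ≤ (c / 2 + c / 2) * ‖h‖ := by
            apply mul_le_mul_of_nonneg_right _ (norm_nonneg h)
            apply add_le_add
            · rw [div_le_iff₀ (by positivity : (0:ℝ) < (R - ‖x‖) ^ 2)]
              calc 2 * (2 * C₀ + 1) * ‖h‖
                  ≤ 2 * (2 * C₀ + 1) * (c * (R - ‖x‖) ^ 2 / (4 * (2 * C₀ + 1))) := by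
                    apply mul_le_mul_of_nonneg_left hh2.le (by positivity)
                _ = c / 2 * (R - ‖x‖) ^ 2 := by field_simp; ring
            · have : (c * (R - ‖x‖) / 2) / (R - ‖x‖) = c / 2 := by field_simp
              rw [this]
        _ = c * ‖h‖ := by ring
  -- conclude
  apply lp.norm_le_of_forall_le (mul_nonneg hc.le (norm_nonneg h))
  intro n
  show ‖(((if hz : ‖x + h‖ < R
          then (⟨fun n => f n ((x + h) n), hmem _ hz⟩ : lp F ∞) else 0) -
        (if hz : ‖x‖ < R
          then (⟨fun n => f n (x n), hmem _ hz⟩ : lp F ∞) else 0) -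
        L h : lp F ∞) : ∀ n, F n) n‖ ≤ c * ‖h‖
  rw [hkey n]
  exact hbound n
end

section
/- Let Ω ⊆ ℂ be an open set, d ∈ ℕ, R > 0 and M ≥ 0. Let P = {w ∈ ℂ^d : max_i |w_i| < R} and suppose f : Ω × P → ℂ is holomorphic (Fréchet ℂ-differentiable) on the open set Ω × P and satisfies |f(z,w)| ≤ M for all (z,w) ∈ Ω × P. Then for each w ∈ P the function f(·,w) is a bounded holomorphic function on Ω, and the map w ↦ f(·,w), from P to the Banach space of bounded continuous complex-valued functions on Ω equipped with the supremum norm, is Fréchet ℂ-differentiable at every point of P. -/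
open Metric

open Complex in
open scoped NNReal in
private lemma cauchy_aux_for_stmt10 {g : ℂ → ℂ} {ρ : ℝ≥0} {M : ℝ} (hρ : 2 ≤ (ρ:ℝ)) (hM : 0 ≤ M)
    (hd : DifferentiableOn ℂ g (closedBall 0 ρ))
    (hbd : ∀ t ∈ closedBall (0:ℂ) ρ, ‖g t‖ ≤ M) :
    ‖g 1 - g 0 - deriv g 0‖ ≤ 2 * M / (ρ:ℝ) ^ 2 ∧ ‖deriv g 0‖ ≤ M / ρ := by
  have hρ0 : (0:ℝ) < ρ := by linarith
  set p := cauchyPowerSeries g 0 ρ with hp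
  have h := hd.hasFPowerSeriesOnBall (by exact_mod_cast hρ0)
  -- coefficient bounds
  have hcont : Continuous fun θ : ℝ => ‖g (circleMap 0 ρ θ)‖ := by
    have : ContinuousOn (fun θ : ℝ => g (circleMap 0 ρ θ)) Set.univ := by
      apply hd.continuousOn.comp (continuous_circleMap 0 ρ).continuousOn
      intro θ _
      simpa using circleMap_mem_closedBall (0:ℂ) hρ0.le θ
    exact (continuousOn_univ.1 this).norm
  have hint : (∫ θ : ℝ in (0)..2 * Real.pi, ‖g (circleMap 0 ρ θ)‖) ≤ 2 * Real.pi * M := by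
    have := intervalIntegral.integral_mono_on (a := 0) (b := 2 * Real.pi) Real.two_pi_pos.le
      (hcont.intervalIntegrable _ _) (intervalIntegrable_const : IntervalIntegrable (fun _ => M) MeasureTheory.volume 0 (2*Real.pi))
      (fun θ _ => hbd _ (by simpa using circleMap_mem_closedBall (0:ℂ) hρ0.le θ))
    simpa [mul_comm] using this.trans_eq (by simp [mul_comm])
  have hcoeff : ∀ n, ‖p.coeff n‖ ≤ M * ((ρ:ℝ)⁻¹) ^ n := by
    intro n
    have h1 : ‖p.coeff n‖ ≤ ‖p n‖ := by
      calc ‖p.coeff n‖ = ‖p n 1‖ := rfl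
        _ ≤ ‖p n‖ * ∏ _i : Fin n, ‖(1:ℂ)‖ := (p n).le_opNorm 1
        _ = ‖p n‖ := by simp
    refine h1.trans ((norm_cauchyPowerSeries_le g 0 ρ n).trans ?_)
    rw [_root_.abs_of_nonneg (by positivity : (0:ℝ) ≤ (ρ:ℝ))]
    have : ((2 * Real.pi)⁻¹ * ∫ θ : ℝ in (0)..2 * Real.pi, ‖g (circleMap 0 ρ θ)‖) ≤ M := by
      rw [inv_mul_le_iff₀ Real.two_pi_pos]
      linarith [hint]
    exact mul_le_mul_of_nonneg_right this (by positivity)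
  -- has sum at 1
  have h1mem : (1:ℂ) ∈ Metric.eball (0:ℂ) ρ := by
    simp only [Metric.mem_eball, edist_zero_right]
    have : ‖(1:ℂ)‖₊ < ρ := by
      simp only [nnnorm_one]
      exact_mod_cast (by linarith : (1:ℝ) < (ρ:ℝ))
    exact_mod_cast this
  have hs : HasSum (fun n : ℕ => p.coeff n) (g 1) := by
    have hs' := h.hasSum (y := (1:ℂ)) h1mem
    have he : (fun n : ℕ => p n fun _ => (1:ℂ)) = fun n : ℕ => p.coeff n := by
      funext n
      rw [FormalMultilinearSeries.apply_eq_pow_smul_coeff, one_pow, one_smul]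
    rw [he] at hs'
    simpa using hs'
  have hc0 : p.coeff 0 = g 0 := h.coeff_zero 1
  have hc1 : p.coeff 1 = deriv g 0 := h.hasFPowerSeriesAt.deriv.symm
  have hs2 : HasSum (fun n : ℕ => p.coeff (n + 2)) (g 1 - (p.coeff 0 + p.coeff 1)) := by
    have := (hasSum_nat_add_iff' (f := fun n : ℕ => p.coeff n) 2).2 hs
    simpa [Finset.sum_range_succ] using this
  have hinv : (ρ:ℝ)⁻¹ < 1 := by
    rw [inv_lt_one_iff₀]; right; linarith
  have hgeo : Summable fun n : ℕ => M * ((ρ:ℝ)⁻¹) ^ (n + 2) := by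
    apply Summable.mul_left
    exact ((summable_geometric_of_lt_one (by positivity) hinv).comp_injective
      (add_left_injective 2))
  have hsum2 : Summable fun n : ℕ => ‖p.coeff (n + 2)‖ :=
    Summable.of_nonneg_of_le (fun n => norm_nonneg _) (fun n => hcoeff (n + 2)) hgeo
  constructor
  · have he : g 1 - g 0 - deriv g 0 = g 1 - (p.coeff 0 + p.coeff 1) := by
      rw [hc0, hc1]; ring
    rw [he, ← hs2.tsum_eq]
    calc ‖∑' n : ℕ, p.coeff (n + 2)‖ ≤ ∑' n : ℕ, ‖p.coeff (n + 2)‖ :=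
          norm_tsum_le_tsum_norm hsum2
      _ ≤ ∑' n : ℕ, M * ((ρ:ℝ)⁻¹) ^ (n + 2) := Summable.tsum_le_tsum (fun n => hcoeff (n + 2)) hsum2 hgeo
      _ = M * (ρ:ℝ)⁻¹ ^ 2 * (1 - (ρ:ℝ)⁻¹)⁻¹ := by
          have hrw : ∀ n : ℕ, M * ((ρ:ℝ)⁻¹) ^ (n + 2) = (M * (ρ:ℝ)⁻¹ ^ 2) * ((ρ:ℝ)⁻¹) ^ n :=
            fun n => by ring
          rw [tsum_congr hrw, tsum_mul_left, tsum_geometric_of_lt_one (by positivity) hinv]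
      _ ≤ 2 * M / (ρ:ℝ) ^ 2 := by
          rw [div_eq_mul_inv, ← inv_pow]
          have h2 : (1 - (ρ:ℝ)⁻¹)⁻¹ ≤ 2 := by
            rw [inv_le_iff_one_le_mul₀ (by nlinarith [inv_le_one_of_one_le₀ (by linarith : (1:ℝ) ≤ ρ)] : (0:ℝ) < 1 - (ρ:ℝ)⁻¹)]
            have : (ρ:ℝ)⁻¹ ≤ 2⁻¹ := by
              apply inv_anti₀ <;> norm_num <;> linarith
            nlinarith
          nlinarith [pow_nonneg (inv_nonneg.2 hρ0.le) 2, mul_nonneg hM (pow_nonneg (inv_nonneg.2 hρ0.le) 2)]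
  · rw [← hc1]
    simpa [div_eq_mul_inv] using hcoeff 1

open Complex in
open scoped NNReal in
private lemma key_slice_for_stmt10 {Ω : Set ℂ} (hΩ : IsOpen Ω) {d : ℕ} {R M : ℝ} (hM : 0 ≤ M)
    {f : ℂ × (Fin d → ℂ) → ℂ}
    (hf : DifferentiableOn ℂ f (Ω ×ˢ ball (0 : Fin d → ℂ) R))
    (hb : ∀ z ∈ Ω, ∀ w ∈ ball (0 : Fin d → ℂ) R, ‖f (z, w)‖ ≤ M)
    {w₀ : Fin d → ℂ} (hw₀ : ‖w₀‖ < R) {δ : ℝ} (hδ : δ = R - ‖w₀‖)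
    {v : Fin d → ℂ} (hv0 : v ≠ 0) (hv : ‖v‖ ≤ δ / 4) {z : ℂ} (hz : z ∈ Ω) :
    ‖f (z, w₀ + v) - f (z, w₀) - fderiv ℂ f (z, w₀) (0, v)‖ ≤ 8 * M / δ ^ 2 * ‖v‖ ^ 2 ∧
    ‖fderiv ℂ f (z, w₀) (0, v)‖ ≤ 2 * M / δ * ‖v‖ := by
  have hδ0 : 0 < δ := by
    have := norm_nonneg v
    rcases lt_or_ge 0 δ with h | h
    · exact h
    · exfalso; apply hv0; rw [← norm_eq_zero]; nlinarith
  have hvn : 0 < ‖v‖ := norm_pos_iff.2 hv0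
  set ρr : ℝ := δ / (2 * ‖v‖) with hρr
  have hρr0 : 0 ≤ ρr := by positivity
  have hρ2 : 2 ≤ ρr := by
    rw [hρr, le_div_iff₀ (by positivity)]
    linarith
  set ρ : ℝ≥0 := ⟨ρr, hρr0⟩ with hρ
  have hρcoe : (ρ : ℝ) = ρr := rfl
  set g : ℂ → ℂ := fun t => f (z, w₀ + t • v) with hg
  have hopen : IsOpen (Ω ×ˢ ball (0 : Fin d → ℂ) R) := hΩ.prod isOpen_ball
  have maps : ∀ t ∈ closedBall (0:ℂ) ρr, w₀ + t • v ∈ ball (0 : Fin d → ℂ) R := by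
    intro t ht
    rw [mem_closedBall_zero_iff] at ht
    rw [mem_ball_zero_iff]
    have h1 : ‖w₀ + t • v‖ ≤ ‖w₀‖ + ‖t‖ * ‖v‖ := by
      refine (norm_add_le _ _).trans ?_
      rw [norm_smul]
    have h2 : ‖t‖ * ‖v‖ ≤ ρr * ‖v‖ := by nlinarith
    have h3 : ρr * ‖v‖ = δ / 2 := by rw [hρr, div_mul_eq_mul_div, div_eq_iff (by positivity)]; ring
    nlinarith
  have hw₀mem : w₀ ∈ ball (0 : Fin d → ℂ) R := mem_ball_zero_iff.2 hw₀
  have hdg : DifferentiableOn ℂ g (closedBall 0 ρr) := by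
    intro t ht
    have hin : DifferentiableAt ℂ (fun t : ℂ => ((z, w₀ + t • v) : ℂ × (Fin d → ℂ))) t :=
      (differentiableAt_const z).prodMk ((differentiableAt_id.smul_const v).const_add w₀)
    have hfat : DifferentiableAt ℂ f (z, w₀ + t • v) :=
      hf.differentiableAt (hopen.mem_nhds ⟨hz, maps t ht⟩)
    exact (hfat.comp t hin).differentiableWithinAt
  have hbg : ∀ t ∈ closedBall (0:ℂ) ρr, ‖g t‖ ≤ M := fun t ht => hb z hz _ (maps t ht)
  have aux := cauchy_aux_for_stmt10 (ρ := ρ) (by rw [hρcoe]; exact hρ2) hM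
    (by rw [hρcoe]; exact hdg) (by rw [hρcoe]; exact hbg)
  have hg1 : g 1 = f (z, w₀ + v) := by simp [hg]
  have hg0 : g 0 = f (z, w₀) := by simp [hg]
  have hfd : DifferentiableAt ℂ f (z, w₀) := hf.differentiableAt (hopen.mem_nhds ⟨hz, hw₀mem⟩)
  have hderiv : deriv g 0 = fderiv ℂ f (z, w₀) (0, v) := by
    have h2 : HasDerivAt (fun t : ℂ => w₀ + t • v) v 0 := by
      have := ((hasDerivAt_id (0:ℂ)).smul_const v).const_add w₀
      simpa using this
    have hpair : HasDerivAt (fun t : ℂ => ((z, w₀ + t • v) : ℂ × (Fin d → ℂ))) (0, v) 0 :=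
      (hasDerivAt_const (0:ℂ) z).prodMk h2
    have hfd' : HasFDerivAt f (fderiv ℂ f (z, w₀)) ((fun t : ℂ => ((z, w₀ + t • v) : ℂ × (Fin d → ℂ))) 0) := by
      simpa using hfd.hasFDerivAt
    have := hfd'.comp_hasDerivAt 0 hpair
    exact this.deriv
  have hρsq : 2 * M / ρr ^ 2 = 8 * M / δ ^ 2 * ‖v‖ ^ 2 := by
    rw [hρr]; field_simp; ring
  have hρ1 : M / ρr = 2 * M / δ * ‖v‖ := by
    rw [hρr]; field_simp
  constructor
  · rw [← hg1, ← hg0, ← hderiv, ← hρsq]; exact aux.1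
  · rw [← hderiv, ← hρ1]; exact aux.2

set_option maxHeartbeats 1000000 in
/-- if `f(z,w)` is holomorphic and bounded by `M` on `Ω × P`, where
`Ω ⊆ ℂ` is open and `P` is the open polydisk of radius `R` in `ℂ^d`, then each
`f(·,w)` is a bounded holomorphic function on `Ω`, and `w ↦ f(·,w)` is Fréchet
`ℂ`-differentiable from `P` into the Banach space of bounded continuous functions
on `Ω` with the sup norm. -/
theorem parameter_dependence_into_bounded_functions
    (Ω : Set ℂ) (hΩ : IsOpen Ω) (d : ℕ) (R M : ℝ) (hR : 0 < R) (hM : 0 ≤ M)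
    (f : ℂ × (Fin d → ℂ) → ℂ)
    (hf : DifferentiableOn ℂ f (Ω ×ˢ ball (0 : Fin d → ℂ) R))
    (hb : ∀ z ∈ Ω, ∀ w ∈ ball (0 : Fin d → ℂ) R, ‖f (z, w)‖ ≤ M) :
    (∀ w ∈ ball (0 : Fin d → ℂ) R,
        DifferentiableOn ℂ (fun z => f (z, w)) Ω ∧ ∀ z ∈ Ω, ‖f (z, w)‖ ≤ M) ∧
    ∃ Φ : (Fin d → ℂ) → BoundedContinuousFunction Ω ℂ,
      (∀ w ∈ ball (0 : Fin d → ℂ) R, ∀ z : Ω, Φ w z = f (z, w)) ∧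
      ∀ w ∈ ball (0 : Fin d → ℂ) R, DifferentiableAt ℂ Φ w := by
  classical
  have hopen : IsOpen (Ω ×ˢ ball (0 : Fin d → ℂ) R) := hΩ.prod isOpen_ball
  have hc : ∀ w ∈ ball (0 : Fin d → ℂ) R, Continuous (fun z : Ω => f (↑z, w)) := by
    intro w hw
    have h1 : ContinuousOn (fun z : ℂ => f (z, w)) Ω :=
      hf.continuousOn.comp ((continuous_id.prodMk continuous_const).continuousOn)
        (fun z hz => ⟨hz, hw⟩)
    exact h1.restrict
  have hdOn : ∀ w ∈ ball (0 : Fin d → ℂ) R, DifferentiableOn ℂ (fun z => f (z, w)) Ω := by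
    intro w hw
    exact hf.comp (differentiableOn_id.prodMk (differentiableOn_const w)) (fun z hz => ⟨hz, hw⟩)
  refine ⟨fun w hw => ⟨hdOn w hw, fun z hz => hb z hz w hw⟩, ?_⟩
  set Φ : (Fin d → ℂ) → BoundedContinuousFunction Ω ℂ := fun w =>
    if h : w ∈ ball (0 : Fin d → ℂ) R then
      BoundedContinuousFunction.ofNormedAddCommGroup (fun z : Ω => f (↑z, w)) (hc w h) M
        (fun z => hb ↑z z.2 w h)
    else 0 with hΦ
  have hΦapp : ∀ w, ∀ h : w ∈ ball (0 : Fin d → ℂ) R, ∀ z : Ω, Φ w z = f (↑z, w) := by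
    intro w h z
    simp only [hΦ, dif_pos h, BoundedContinuousFunction.coe_ofNormedAddCommGroup]
  refine ⟨Φ, fun w hw z => hΦapp w hw z, ?_⟩
  intro w₀ hw₀
  have hw₀n : ‖w₀‖ < R := mem_ball_zero_iff.1 hw₀
  set δ : ℝ := R - ‖w₀‖ with hδ
  have hδ0 : 0 < δ := by simp [hδ]; linarith
  have key := fun {v : Fin d → ℂ} (hv0 : v ≠ 0) (hv : ‖v‖ ≤ δ / 4) {z : ℂ} (hz : z ∈ Ω) =>
    key_slice_for_stmt10 hΩ hM hf hb hw₀n hδ hv0 hv hz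
  set φ : (Fin d → ℂ) → Ω → ℂ := fun v z => fderiv ℂ f (↑z, w₀) (0, v) with hφ
  -- linearity of φ in v
  have hφadd : ∀ (z : Ω) (v u : Fin d → ℂ), φ (v + u) z = φ v z + φ u z := by
    intro z v u
    have : ((0, v + u) : ℂ × (Fin d → ℂ)) = (0, v) + (0, u) := by simp
    simp only [hφ, this, map_add]
  have hφsmul : ∀ (z : Ω) (c : ℂ) (v : Fin d → ℂ), φ (c • v) z = c • φ v z := by
    intro z c v
    have : ((0, c • v) : ℂ × (Fin d → ℂ)) = c • (0, v) := by simp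
    simp only [hφ, this, map_smul]
  have hφzero : ∀ z : Ω, φ 0 z = 0 := by
    intro z
    have : ((0, (0 : Fin d → ℂ)) : ℂ × (Fin d → ℂ)) = 0 := by simp
    simp only [hφ, this, map_zero]
  -- bound on φ
  have hφbound : ∀ (z : Ω) (v : Fin d → ℂ), ‖φ v z‖ ≤ 2 * M / δ * ‖v‖ := by
    intro z v
    by_cases hv0 : v = 0
    · simp [hv0, hφzero]
    · have hvn : 0 < ‖v‖ := norm_pos_iff.2 hv0
      set c : ℂ := ((δ / (4 * ‖v‖) : ℝ) : ℂ) with hcdef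
      have hcn : ‖c‖ = δ / (4 * ‖v‖) := by
        rw [hcdef, Complex.norm_real, Real.norm_eq_abs, abs_of_pos (by positivity)]
      have hc0 : c ≠ 0 := by
        intro hh
        rw [hh, norm_zero] at hcn
        have : (0:ℝ) < δ / (4 * ‖v‖) := by positivity
        linarith
      set u : Fin d → ℂ := c • v with hu
      have hun : ‖u‖ = δ / 4 := by
        rw [hu, norm_smul, hcn]; field_simp
      have hu0 : u ≠ 0 := smul_ne_zero hc0 hv0
      have hkey := (key hu0 (le_of_eq hun) z.2).2
      have hrel : ‖u‖ = ‖c‖ * ‖v‖ := by rw [hu, norm_smul]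
      have hphi : ‖φ u z‖ = ‖c‖ * ‖φ v z‖ := by
        rw [hu, hφsmul, norm_smul]
      have hφu : ‖φ u z‖ ≤ 2 * M / δ * ‖u‖ := hkey
      rw [hphi, hrel] at hφu
      have hcpos : 0 < ‖c‖ := norm_pos_iff.2 hc0
      have h2 : ‖c‖ * ‖φ v z‖ ≤ ‖c‖ * (2 * M / δ * ‖v‖) := by linarith [hφu]
      exact le_of_mul_le_mul_left h2 hcpos
  -- continuity of φ v
  have hφcont : ∀ v : Fin d → ℂ, Continuous (fun z : Ω => φ v z) := by
    intro v
    by_cases hv0 : v = 0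
    · have : (fun z : Ω => φ v z) = fun _ => 0 := funext fun z => by rw [hv0, hφzero]
      rw [this]; exact continuous_const
    · have hvn : 0 < ‖v‖ := norm_pos_iff.2 hv0
      set N : ℕ := ⌈4 * ‖v‖ / δ⌉₊ with hN
      have hNle : 4 * ‖v‖ / δ ≤ N := Nat.le_ceil _
      have hm : ∀ n : ℕ, (0:ℝ) < (n + N + 1 : ℕ) := fun n => by positivity
      set q : ℕ → Ω → ℂ := fun n z =>
        ((n + N + 1 : ℕ) : ℂ) * (f (↑z, w₀ + (((n + N + 1 : ℕ) : ℂ))⁻¹ • v) - f (↑z, w₀)) with hq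
      have humem : ∀ n : ℕ, ‖(((n + N + 1 : ℕ) : ℂ))⁻¹ • v‖ ≤ δ / 4 := by
        intro n
        rw [norm_smul, norm_inv]
        have h1 : ‖((n + N + 1 : ℕ) : ℂ)‖ = ((n + N + 1 : ℕ) : ℝ) := by
          rw [Complex.norm_natCast]
        rw [h1]
        rw [inv_mul_le_iff₀ (hm n)]
        have h2 : (N : ℝ) + 1 ≤ ((n + N + 1 : ℕ) : ℝ) := by push_cast; linarith [Nat.cast_nonneg (α := ℝ) n]
        have h3 : 4 * ‖v‖ ≤ δ * ((N:ℝ) + 1) := by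
          have h4 := (div_le_iff₀ hδ0).1 hNle
          nlinarith
        nlinarith
      have hwmem : ∀ n : ℕ, w₀ + (((n + N + 1 : ℕ) : ℂ))⁻¹ • v ∈ ball (0 : Fin d → ℂ) R := by
        intro n
        rw [mem_ball_zero_iff]
        have := norm_add_le w₀ ((((n + N + 1 : ℕ) : ℂ))⁻¹ • v)
        have h2 := humem n
        simp only [hδ] at h2 hδ0
        linarith
      have hqcont : ∀ n : ℕ, Continuous (q n) := by
        intro n
        exact continuous_const.mul ((hc _ (hwmem n)).sub (hc w₀ hw₀))
      have htu : TendstoUniformly q (fun z => φ v z) Filter.atTop := by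
        rw [Metric.tendstoUniformly_iff]
        intro ε hε
        have hT : Filter.Tendsto (fun n : ℕ => (8 * M / δ ^ 2 * ‖v‖ ^ 2) / ((n + N + 1 : ℕ) : ℝ))
            Filter.atTop (nhds 0) := by
          apply Filter.Tendsto.div_atTop tendsto_const_nhds
          exact tendsto_natCast_atTop_atTop.comp (Filter.tendsto_add_atTop_nat (N + 1))
        have hev := hT.eventually (gt_mem_nhds hε)
        filter_upwards [hev] with n hn z
        -- pointwise estimate
        set m : ℕ := n + N + 1 with hmdef
        have hm0 : ((m : ℕ) : ℂ) ≠ 0 := by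
          exact Nat.cast_ne_zero.2 (Nat.succ_ne_zero _)
        set u : Fin d → ℂ := (((m : ℕ) : ℂ))⁻¹ • v with hudef
        have hu0 : u ≠ 0 := smul_ne_zero (inv_ne_zero hm0) hv0
        have hkey := (key hu0 (humem n) z.2).1
        have hvu : v = ((m : ℕ) : ℂ) • u := by
          rw [hudef, smul_smul, mul_inv_cancel₀ hm0, one_smul]
        have hφvu : φ v z = ((m : ℕ) : ℂ) * φ u z := by
          conv_lhs => rw [hvu]
          rw [hφsmul]; rfl
        have hqz : q n z = ((m : ℕ) : ℂ) * (f (↑z, w₀ + u) - f (↑z, w₀)) := rfl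
        have hdiff : φ v z - q n z
            = -(((m : ℕ) : ℂ) * (f (↑z, w₀ + u) - f (↑z, w₀) - φ u z)) := by
          rw [hφvu, hqz]; ring
        rw [dist_eq_norm, hdiff, norm_neg, norm_mul, Complex.norm_natCast]
        have hnorm_u : ‖u‖ = ‖v‖ / (m : ℝ) := by
          rw [hudef, norm_smul, norm_inv, Complex.norm_natCast]
          field_simp
        have hest : ‖f (↑z, w₀ + u) - f (↑z, w₀) - φ u z‖ ≤ 8 * M / δ ^ 2 * ‖u‖ ^ 2 := hkey
        have hmpos : (0:ℝ) < (m : ℝ) := hm n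
        calc (m : ℝ) * ‖f (↑z, w₀ + u) - f (↑z, w₀) - φ u z‖
            ≤ (m : ℝ) * (8 * M / δ ^ 2 * ‖u‖ ^ 2) := by
              exact mul_le_mul_of_nonneg_left hest hmpos.le
          _ = (8 * M / δ ^ 2 * ‖v‖ ^ 2) / (m : ℝ) := by
              rw [hnorm_u]; field_simp
          _ < ε := hn
      exact htu.continuous (Filter.Eventually.of_forall hqcont).frequently
  -- build the continuous linear map
  set Lv : (Fin d → ℂ) → BoundedContinuousFunction Ω ℂ := fun v =>
    BoundedContinuousFunction.ofNormedAddCommGroup (fun z : Ω => φ v z) (hφcont v)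
      (2 * M / δ * ‖v‖) (fun z => hφbound z v) with hLv
  have hLvapp : ∀ v z, Lv v z = φ v z := fun v z => rfl
  set Lmap : (Fin d → ℂ) →ₗ[ℂ] BoundedContinuousFunction Ω ℂ :=
    { toFun := Lv
      map_add' := fun v u => by
        apply BoundedContinuousFunction.ext
        intro z
        simp only [hLvapp, BoundedContinuousFunction.add_apply, hφadd]
      map_smul' := fun c v => by
        apply BoundedContinuousFunction.ext
        intro z
        simp only [hLvapp, BoundedContinuousFunction.smul_apply, hφsmul, RingHom.id_apply] } with hLmap
  set L : (Fin d → ℂ) →L[ℂ] BoundedContinuousFunction Ω ℂ :=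
    Lmap.mkContinuous (2 * M / δ) (fun v =>
      BoundedContinuousFunction.norm_ofNormedAddCommGroup_le (hφcont v) (by positivity)
        (fun z => hφbound z v)) with hL
  have hLapp : ∀ v z, L v z = φ v z := fun v z => rfl
  -- final differentiability
  suffices hfd : HasFDerivAt Φ L w₀ from hfd.differentiableAt
  rw [hasFDerivAt_iff_isLittleO_nhds_zero, Asymptotics.isLittleO_iff]
  intro c hcpos
  set C : ℝ := 8 * M / δ ^ 2 with hCdef
  have hC0 : 0 ≤ C := by positivity
  have hball : closedBall (0 : Fin d → ℂ) (min (δ / 4) (c / (C + 1))) ∈ nhds (0 : Fin d → ℂ) :=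
    closedBall_mem_nhds _ (by positivity)
  filter_upwards [hball] with h hmem
  rw [mem_closedBall_zero_iff] at hmem
  have hh4 : ‖h‖ ≤ δ / 4 := hmem.trans (min_le_left _ _)
  have hhc : ‖h‖ ≤ c / (C + 1) := hmem.trans (min_le_right _ _)
  have hmain : ‖Φ (w₀ + h) - Φ w₀ - L h‖ ≤ C * (‖h‖ * ‖h‖) := by
    by_cases h0 : h = 0
    · simp [h0, map_zero]
    · have hwh : w₀ + h ∈ ball (0 : Fin d → ℂ) R := by
        rw [mem_ball_zero_iff]
        have := norm_add_le w₀ h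
        simp only [hδ] at hh4 hδ0
        linarith
      rw [BoundedContinuousFunction.norm_le (by positivity)]
      intro z
      have happ : (Φ (w₀ + h) - Φ w₀ - L h) z = f (↑z, w₀ + h) - f (↑z, w₀) - φ h z := by
        simp only [BoundedContinuousFunction.sub_apply, hΦapp _ hwh, hΦapp _ hw₀, hLapp]
      rw [happ]
      have := (key h0 hh4 z.2).1
      calc ‖f (↑z, w₀ + h) - f (↑z, w₀) - φ h z‖ ≤ 8 * M / δ ^ 2 * ‖h‖ ^ 2 := this
        _ = C * (‖h‖ * ‖h‖) := by rw [hCdef]; ring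
  calc ‖Φ (w₀ + h) - Φ w₀ - L h‖ ≤ C * (‖h‖ * ‖h‖) := hmain
    _ ≤ c * ‖h‖ := by
        have h1 : ‖h‖ * (C + 1) ≤ c := (le_div_iff₀ (by positivity)).1 hhc
        nlinarith [mul_le_mul_of_nonneg_right h1 (norm_nonneg h), sq_nonneg ‖h‖,
          mul_nonneg (norm_nonneg h) (norm_nonneg h)]
end

section
/- Let a ∈ ℂ and 0 ≤ r₁ < s < r₂, and let f be holomorphic on the annulus A = {z ∈ ℂ : r₁ < |z − a| < r₂}. If ∮_{|z−a|=s} (z − a)^n f(z) dz = 0 for every integer n ∈ ℤ, then f is identically zero on A. -/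
open Metric Set Filter

lemma annulus_isOpen (a : ℂ) (r₁ r₂ : ℝ) :
    IsOpen {z : ℂ | r₁ < ‖z - a‖ ∧ ‖z - a‖ < r₂} := by
  have hc : Continuous fun z : ℂ => ‖z - a‖ := (continuous_id.sub continuous_const).norm
  exact (isOpen_lt continuous_const hc).inter (isOpen_lt hc continuous_const)

/-- Transfer the vanishing of Laurent coefficients from radius `s` to any radius. -/
lemma aux_key (a : ℂ) (r₁ s r₂ : ℝ) (h₁ : 0 ≤ r₁) (h₂ : r₁ < s) (h₃ : s < r₂) (f : ℂ → ℂ)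
    (hf : DifferentiableOn ℂ f {z : ℂ | r₁ < ‖z - a‖ ∧ ‖z - a‖ < r₂})
    (hv : ∀ n : ℤ, (∮ z in C(a, s), (z - a) ^ n * f z) = 0)
    (n : ℤ) {ρ : ℝ} (hρ₁ : r₁ < ρ) (hρ₂ : ρ < r₂) :
    (∮ z in C(a, ρ), (z - a) ^ n * f z) = 0 := by
  set U := {z : ℂ | r₁ < ‖z - a‖ ∧ ‖z - a‖ < r₂} with hU
  have hUo : IsOpen U := annulus_isOpen a r₁ r₂
  have hg : ∀ w ∈ U, DifferentiableAt ℂ (fun z => (z - a) ^ n * f z) w := by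
    intro w hw
    have hwa : w - a ≠ 0 := by
      intro h
      have : (0:ℝ) < ‖w - a‖ := lt_of_le_of_lt h₁ hw.1
      simp [h] at this
    exact ((differentiableAt_id.sub (differentiableAt_const a)).zpow (Or.inl hwa)).mul
      ((hf w hw).differentiableAt (hUo.mem_nhds hw))
  have H : ∀ r R : ℝ, r₁ < r → r ≤ R → R < r₂ →
      (∮ z in C(a, R), (z - a) ^ n * f z) = ∮ z in C(a, r), (z - a) ^ n * f z := by
    intro r R hr hrR hR
    have hsub : closedBall a R \ ball a r ⊆ U := by
      intro w hw
      constructor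
      · have := hw.2
        simp only [mem_ball, Complex.dist_eq, not_lt] at this
        exact lt_of_lt_of_le hr this
      · have := hw.1
        simp only [mem_closedBall, Complex.dist_eq] at this
        exact lt_of_le_of_lt this hR
    refine Complex.circleIntegral_eq_of_differentiable_on_annulus_off_countable
      (lt_of_le_of_lt h₁ hr) hrR countable_empty
      (fun w hw => ((hg w (hsub hw)).continuousAt).continuousWithinAt) ?_
    intro w hw
    refine hg w (hsub ?_)
    exact ⟨ball_subset_closedBall hw.1.1, fun h => hw.1.2 (ball_subset_closedBall h)⟩
  rcases le_total ρ s with h | h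
  · rw [← H ρ s hρ₁ h h₃]; exact hv n
  · rw [H s ρ h₂ h hρ₂]; exact hv n

/-- A complex number whose norm is dominated by `q ^ N * C` for all `N`, `q < 1`, is zero. -/
lemma aux_zero (X : ℂ) (q C : ℝ) (hq0 : 0 ≤ q) (hq1 : q < 1)
    (h : ∀ N : ℕ, ‖X‖ ≤ q ^ N * C) : X = 0 := by
  rw [← norm_le_zero_iff]
  have ht : Tendsto (fun N : ℕ => q ^ N * C) atTop (nhds 0) := by
    simpa using (tendsto_pow_atTop_nhds_zero_of_lt_one hq0 hq1).mul_const C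
  exact ge_of_tendsto ht (Eventually.of_forall h)


/-- a holomorphic function on an annulus all of whose Laurent
coefficients (computed as contour integrals over an intermediate circle) vanish is
identically zero on the annulus. -/
theorem laurent_coefficients_vanish_imp_zero
    (a : ℂ) (r₁ s r₂ : ℝ) (h₁ : 0 ≤ r₁) (h₂ : r₁ < s) (h₃ : s < r₂)
    (f : ℂ → ℂ)
    (hf : DifferentiableOn ℂ f {z : ℂ | r₁ < ‖z - a‖ ∧ ‖z - a‖ < r₂})
    (hv : ∀ n : ℤ, (∮ z in C(a, s), (z - a) ^ n * f z) = 0) :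
    ∀ z ∈ {z : ℂ | r₁ < ‖z - a‖ ∧ ‖z - a‖ < r₂}, f z = 0 := by
  intro z₀ hz₀
  set U := {z : ℂ | r₁ < ‖z - a‖ ∧ ‖z - a‖ < r₂} with hUdef
  have hUo : IsOpen U := annulus_isOpen a r₁ r₂
  set t : ℝ := ‖z₀ - a‖ with htdef
  have ht1 : r₁ < t := hz₀.1
  have ht2 : t < r₂ := hz₀.2
  have ht0 : 0 < t := lt_of_le_of_lt h₁ ht1
  set ρ₁ : ℝ := (r₁ + t) / 2 with hρ₁def
  set ρ₂ : ℝ := (t + r₂) / 2 with hρ₂def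
  have hρ₁a : r₁ < ρ₁ := by rw [hρ₁def]; linarith
  have hρ₁b : ρ₁ < t := by rw [hρ₁def]; linarith
  have hρ₂a : t < ρ₂ := by rw [hρ₂def]; linarith
  have hρ₂b : ρ₂ < r₂ := by rw [hρ₂def]; linarith
  have hρ₁0 : 0 < ρ₁ := lt_of_le_of_lt h₁ hρ₁a
  have hρ₂0 : 0 < ρ₂ := lt_trans ht0 hρ₂a
  have hle : ρ₁ ≤ ρ₂ := le_of_lt (lt_trans hρ₁b hρ₂a)
  clear_value t ρ₁ ρ₂
  -- spheres lie in the annulus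
  have hsphU : ∀ ρ : ℝ, r₁ < ρ → ρ < r₂ → sphere a ρ ⊆ U := by
    intro ρ hra hrb w hw
    rw [mem_sphere_iff_norm] at hw
    exact ⟨hw ▸ hra, hw ▸ hrb⟩
  -- bounds for f on spheres
  have bdd : ∀ ρ : ℝ, r₁ < ρ → ρ < r₂ → ∃ M : ℝ, 0 ≤ M ∧ ∀ w ∈ sphere a ρ, ‖f w‖ ≤ M := by
    intro ρ hra hrb
    obtain ⟨M, hM⟩ := (isCompact_sphere a ρ).exists_bound_of_continuousOn
      (hf.continuousOn.mono (hsphU ρ hra hrb))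
    exact ⟨max M 0, le_max_right _ _, fun w hw => le_trans (hM w hw) (le_max_left _ _)⟩
  have key := aux_key a r₁ s r₂ h₁ h₂ h₃ f hf hv
  -- basic facts on spheres
  have hsph : ∀ (ρ : ℝ), 0 < ρ → ρ ≠ t → ∀ w ∈ sphere a ρ, w - a ≠ 0 ∧ w - z₀ ≠ 0 := by
    intro ρ hρ0 hρt w hw
    rw [mem_sphere_iff_norm] at hw
    constructor
    · intro h; rw [h, norm_zero] at hw; exact hρ0.ne' hw.symm
    · intro h
      apply hρt
      have hwz : w = z₀ := by rwa [sub_eq_zero] at h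
      rw [hwz] at hw; rw [htdef, ← hw]
  set F : ℂ → ℂ := fun w => (w - z₀)⁻¹ * f w with hFdef
  -- continuity of the relevant integrands
  have hFc : ∀ (ρ : ℝ), r₁ < ρ → ρ < r₂ → 0 < ρ → ρ ≠ t →
      ContinuousOn F (sphere a ρ) := by
    intro ρ hra hrb hρ0 hρt
    exact ContinuousOn.mul
      (ContinuousOn.inv₀ ((continuous_id.sub continuous_const).continuousOn)
        (fun w hw => (hsph ρ hρ0 hρt w hw).2))
      (hf.continuousOn.mono (hsphU ρ hra hrb))
  -- =====================  outer integral  =====================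
  set J₂ : ℂ := ∮ w in C(a, ρ₂), F w with hJ₂def
  have hρ₂t : ρ₂ ≠ t := hρ₂a.ne'
  have hρ₂r₁ : r₁ < ρ₂ := lt_trans ht1 hρ₂a
  obtain ⟨M₂, hM₂0, hM₂⟩ := bdd ρ₂ hρ₂r₁ hρ₂b
  set Gout : ℕ → ℂ → ℂ := fun N w => ((w - a) ^ N)⁻¹ * ((w - z₀)⁻¹ * f w) with hGdef
  have hGc : ∀ N : ℕ, ContinuousOn (Gout N) (sphere a ρ₂) := by
    intro N
    exact ContinuousOn.mul
      (((continuous_id.sub continuous_const).pow N).continuousOn.inv₀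
        (fun w hw => pow_ne_zero N (hsph ρ₂ hρ₂0 hρ₂t w hw).1))
      (hFc ρ₂ hρ₂r₁ hρ₂b hρ₂0 hρ₂t)
  have hPc : ∀ N : ℕ, ContinuousOn (fun w => ((w - a) ^ (N+1))⁻¹ * f w) (sphere a ρ₂) := by
    intro N
    exact ContinuousOn.mul
      (((continuous_id.sub continuous_const).pow (N+1)).continuousOn.inv₀
        (fun w hw => pow_ne_zero (N+1) (hsph ρ₂ hρ₂0 hρ₂t w hw).1))
      (hf.continuousOn.mono (hsphU ρ₂ hρ₂r₁ hρ₂b))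
  have keyNat2 : ∀ N : ℕ, (∮ w in C(a, ρ₂), ((w - a) ^ (N+1))⁻¹ * f w) = 0 := by
    intro N
    rw [← key (-(N+1 : ℕ) : ℤ) hρ₂r₁ hρ₂b]
    refine circleIntegral.integral_congr hρ₂0.le fun w hw => ?_
    rw [zpow_neg, zpow_natCast]
  have step2 : ∀ N : ℕ,
      (∮ w in C(a, ρ₂), Gout N w) = (z₀ - a) * ∮ w in C(a, ρ₂), Gout (N+1) w := by
    intro N
    have eq : Set.EqOn (fun w => Gout N w - (z₀ - a) * Gout (N+1) w)
        (fun w => ((w - a) ^ (N+1))⁻¹ * f w) (sphere a ρ₂) := by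
      intro w hw
      obtain ⟨hwa, hwz⟩ := hsph ρ₂ hρ₂0 hρ₂t w hw
      simp only [hGdef]
      field_simp
      ring
    have h0 : (∮ w in C(a, ρ₂), (Gout N w - (z₀ - a) * Gout (N+1) w)) = 0 := by
      rw [circleIntegral.integral_congr hρ₂0.le eq]; exact keyNat2 N
    rw [circleIntegral.integral_sub ((hGc N).circleIntegrable hρ₂0.le)
        ((show ContinuousOn (fun w => (z₀ - a) * Gout (N+1) w) (sphere a ρ₂) from
          continuousOn_const.mul (hGc (N+1))).circleIntegrable hρ₂0.le),
      circleIntegral.integral_const_mul, sub_eq_zero] at h0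
    exact h0
  have claim2 : ∀ N : ℕ, J₂ = (z₀ - a) ^ N * ∮ w in C(a, ρ₂), Gout N w := by
    intro N
    induction N with
    | zero =>
      rw [pow_zero, one_mul, hJ₂def]
      congr 1
      funext w
      simp [hGdef, hFdef]
    | succ N ih => rw [ih, step2 N, pow_succ]; ring
  have bound2 : ∀ N : ℕ,
      ‖J₂‖ ≤ (t/ρ₂)^N * (2 * Real.pi * ρ₂ * ((ρ₂ - t)⁻¹ * M₂)) := by
    intro N
    have hdpos : 0 < ρ₂ - t := by linarith
    have hb : ∀ w ∈ sphere a ρ₂, ‖Gout N w‖ ≤ (ρ₂ ^ N)⁻¹ * ((ρ₂ - t)⁻¹ * M₂) := by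
      intro w hw
      have hna : ‖w - a‖ = ρ₂ := mem_sphere_iff_norm.mp hw
      have hd : ρ₂ - t ≤ ‖w - z₀‖ := by
        calc ρ₂ - t = ‖w - a‖ - ‖z₀ - a‖ := by rw [hna, htdef]
        _ ≤ ‖(w - a) - (z₀ - a)‖ := norm_sub_norm_le _ _
        _ = ‖w - z₀‖ := by congr 1; ring
      have heq : ‖Gout N w‖ = (ρ₂ ^ N)⁻¹ * (‖w - z₀‖⁻¹ * ‖f w‖) := by
        simp [hGdef, norm_mul, norm_inv, norm_pow, hna]
      rw [heq]
      refine mul_le_mul_of_nonneg_left ?_ (by positivity)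
      refine mul_le_mul ?_ (hM₂ w hw) (norm_nonneg _) (by positivity)
      exact inv_anti₀ hdpos hd
    have h1 : ‖(∮ w in C(a, ρ₂), Gout N w)‖ ≤
        2 * Real.pi * ρ₂ * ((ρ₂ ^ N)⁻¹ * ((ρ₂ - t)⁻¹ * M₂)) := by
      exact circleIntegral.norm_integral_le_of_norm_le_const hρ₂0.le hb
    calc ‖J₂‖ = ‖(z₀ - a) ^ N‖ * ‖∮ w in C(a, ρ₂), Gout N w‖ := by
          rw [claim2 N, norm_mul]
    _ = t ^ N * ‖∮ w in C(a, ρ₂), Gout N w‖ := by rw [norm_pow, ← htdef]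
    _ ≤ t ^ N * (2 * Real.pi * ρ₂ * ((ρ₂ ^ N)⁻¹ * ((ρ₂ - t)⁻¹ * M₂))) :=
        mul_le_mul_of_nonneg_left h1 (pow_nonneg ht0.le N)
    _ = (t/ρ₂)^N * (2 * Real.pi * ρ₂ * ((ρ₂ - t)⁻¹ * M₂)) := by
        rw [div_pow]
        ring
  have hJ₂ : J₂ = 0 :=
    aux_zero J₂ (t/ρ₂) _ (by positivity) ((div_lt_one hρ₂0).mpr hρ₂a) bound2
  -- =====================  inner integral  =====================
  set J₁ : ℂ := ∮ w in C(a, ρ₁), F w with hJ₁def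
  have hρ₁t : ρ₁ ≠ t := hρ₁b.ne
  have hρ₁r₂ : ρ₁ < r₂ := lt_trans hρ₁b ht2
  obtain ⟨M₁, hM₁0, hM₁⟩ := bdd ρ₁ hρ₁a hρ₁r₂
  set Kin : ℕ → ℂ → ℂ := fun N w => (w - a) ^ N * ((w - z₀)⁻¹ * f w) with hKdef
  have hKc : ∀ N : ℕ, ContinuousOn (Kin N) (sphere a ρ₁) := by
    intro N
    exact ContinuousOn.mul ((continuous_id.sub continuous_const).pow N).continuousOn
      (hFc ρ₁ hρ₁a hρ₁r₂ hρ₁0 hρ₁t)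
  have keyNat1 : ∀ N : ℕ, (∮ w in C(a, ρ₁), (w - a) ^ N * f w) = 0 := by
    intro N
    rw [← key (N : ℤ) hρ₁a hρ₁r₂]
    refine circleIntegral.integral_congr hρ₁0.le fun w hw => ?_
    rw [zpow_natCast]
  have step1 : ∀ N : ℕ,
      (∮ w in C(a, ρ₁), Kin (N+1) w) = (z₀ - a) * ∮ w in C(a, ρ₁), Kin N w := by
    intro N
    have eq : Set.EqOn (fun w => Kin (N+1) w - (z₀ - a) * Kin N w)
        (fun w => (w - a) ^ N * f w) (sphere a ρ₁) := by
      intro w hw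
      obtain ⟨hwa, hwz⟩ := hsph ρ₁ hρ₁0 hρ₁t w hw
      simp only [hKdef]
      field_simp
      ring
    have h0 : (∮ w in C(a, ρ₁), (Kin (N+1) w - (z₀ - a) * Kin N w)) = 0 := by
      rw [circleIntegral.integral_congr hρ₁0.le eq]; exact keyNat1 N
    rw [circleIntegral.integral_sub ((hKc (N+1)).circleIntegrable hρ₁0.le)
        ((show ContinuousOn (fun w => (z₀ - a) * Kin N w) (sphere a ρ₁) from
          continuousOn_const.mul (hKc N)).circleIntegrable hρ₁0.le),
      circleIntegral.integral_const_mul, sub_eq_zero] at h0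
    exact h0
  have claim1 : ∀ N : ℕ, (∮ w in C(a, ρ₁), Kin N w) = (z₀ - a) ^ N * J₁ := by
    intro N
    induction N with
    | zero =>
      rw [pow_zero, one_mul, hJ₁def]
      congr 1
      funext w
      simp [hKdef, hFdef]
    | succ N ih => rw [step1 N, ih, pow_succ]; ring
  have bound1 : ∀ N : ℕ,
      ‖J₁‖ ≤ (ρ₁/t)^N * (2 * Real.pi * ρ₁ * ((t - ρ₁)⁻¹ * M₁)) := by
    intro N
    have hdpos : 0 < t - ρ₁ := by linarith
    have hb : ∀ w ∈ sphere a ρ₁, ‖Kin N w‖ ≤ ρ₁ ^ N * ((t - ρ₁)⁻¹ * M₁) := by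
      intro w hw
      have hna : ‖w - a‖ = ρ₁ := mem_sphere_iff_norm.mp hw
      have hd : t - ρ₁ ≤ ‖w - z₀‖ := by
        calc t - ρ₁ = ‖z₀ - a‖ - ‖w - a‖ := by rw [hna, htdef]
        _ ≤ ‖(z₀ - a) - (w - a)‖ := norm_sub_norm_le _ _
        _ = ‖w - z₀‖ := by rw [← norm_neg]; congr 1; ring
      have heq : ‖Kin N w‖ = ρ₁ ^ N * (‖w - z₀‖⁻¹ * ‖f w‖) := by
        simp [hKdef, norm_mul, norm_inv, norm_pow, hna]
      rw [heq]
      refine mul_le_mul_of_nonneg_left ?_ (by positivity)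
      refine mul_le_mul ?_ (hM₁ w hw) (norm_nonneg _) (by positivity)
      exact inv_anti₀ hdpos hd
    have h1 : ‖(∮ w in C(a, ρ₁), Kin N w)‖ ≤
        2 * Real.pi * ρ₁ * (ρ₁ ^ N * ((t - ρ₁)⁻¹ * M₁)) :=
      circleIntegral.norm_integral_le_of_norm_le_const hρ₁0.le hb
    have h2 : t ^ N * ‖J₁‖ ≤ 2 * Real.pi * ρ₁ * (ρ₁ ^ N * ((t - ρ₁)⁻¹ * M₁)) := by
      calc t ^ N * ‖J₁‖ = ‖(z₀ - a) ^ N * J₁‖ := by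
            rw [norm_mul, norm_pow, ← htdef]
      _ = ‖(∮ w in C(a, ρ₁), Kin N w)‖ := by rw [claim1 N]
      _ ≤ _ := h1
    have htN : (0:ℝ) < t ^ N := pow_pos ht0 N
    calc ‖J₁‖ = (t ^ N)⁻¹ * (t ^ N * ‖J₁‖) := by
          field_simp
    _ ≤ (t ^ N)⁻¹ * (2 * Real.pi * ρ₁ * (ρ₁ ^ N * ((t - ρ₁)⁻¹ * M₁))) :=
          mul_le_mul_of_nonneg_left h2 (by positivity)
    _ = (ρ₁/t)^N * (2 * Real.pi * ρ₁ * ((t - ρ₁)⁻¹ * M₁)) := by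
          rw [div_pow]
          ring
  have hJ₁ : J₁ = 0 :=
    aux_zero J₁ (ρ₁/t) _ (by positivity) ((div_lt_one ht0).mpr hρ₁b) bound1
  -- =====================  Cauchy formula via dslope  =====================
  set g : ℂ → ℂ := dslope f z₀ with hgdef
  have hfz₀ : DifferentiableAt ℂ f z₀ := (hf z₀ hz₀).differentiableAt (hUo.mem_nhds hz₀)
  have hE : (∮ w in C(a, ρ₂), g w) = ∮ w in C(a, ρ₁), g w := by
    refine Complex.circleIntegral_eq_of_differentiable_on_annulus_off_countable hρ₁0 hle
      (countable_singleton z₀) ?_ ?_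
    · intro w hw
      have hwU : w ∈ U := by
        refine ⟨lt_of_lt_of_le hρ₁a ?_, lt_of_le_of_lt ?_ hρ₂b⟩
        · have := hw.2
          simp only [mem_ball, Complex.dist_eq, not_lt] at this
          exact this
        · have := hw.1
          simp only [mem_closedBall, Complex.dist_eq] at this
          exact this
      rcases eq_or_ne w z₀ with rfl | hne
      · exact (continuousAt_dslope_same.mpr hfz₀).continuousWithinAt
      · exact ((continuousAt_dslope_of_ne hne).mpr
          (((hf w hwU).differentiableAt (hUo.mem_nhds hwU)).continuousAt)).continuousWithinAt
    · intro w hw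
      have hne : w ≠ z₀ := by
        intro h; exact hw.2 (by simp [h])
      have hwU : w ∈ U := by
        refine ⟨lt_of_lt_of_le hρ₁a ?_, lt_of_le_of_lt ?_ hρ₂b⟩
        · have := hw.1.2
          simp only [mem_closedBall, Complex.dist_eq, not_le] at this
          exact this.le
        · have := hw.1.1
          simp only [mem_ball, Complex.dist_eq] at this
          exact this.le
      exact (differentiableAt_dslope_of_ne hne).mpr
        ((hf w hwU).differentiableAt (hUo.mem_nhds hwU))
  have hz₀ball₂ : z₀ ∈ ball a ρ₂ := by
    simp only [mem_ball, Complex.dist_eq, ← htdef]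
    exact hρ₂a
  have hgs : ∀ ρ : ℝ, 0 < ρ → ρ ≠ t →
      Set.EqOn g (fun w => F w - f z₀ * (w - z₀)⁻¹) (sphere a ρ) := by
    intro ρ hρ0 hρt w hw
    have hne : w ≠ z₀ := by
      intro h
      exact (hsph ρ hρ0 hρt w hw).2 (by rw [h, sub_self])
    simp only [hgdef, hFdef]
    rw [dslope_of_ne _ hne, slope_def_field, div_eq_mul_inv]
    ring
  have hinv₂ : (∮ w in C(a, ρ₂), f z₀ * (w - z₀)⁻¹) = f z₀ * (2 * Real.pi * Complex.I) := by
    rw [circleIntegral.integral_const_mul, circleIntegral.integral_sub_inv_of_mem_ball hz₀ball₂]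
  have hinv₁ : (∮ w in C(a, ρ₁), f z₀ * (w - z₀)⁻¹) = 0 := by
    rw [circleIntegral.integral_const_mul]
    have : (∮ w in C(a, ρ₁), (w - z₀)⁻¹) = 0 := by
      refine Complex.circleIntegral_eq_zero_of_differentiable_on_off_countable hρ₁0.le
        countable_empty ?_ ?_
      · intro w hw
        refine (ContinuousAt.continuousWithinAt ?_)
        refine ContinuousAt.inv₀ (by fun_prop) ?_
        intro h
        have hwz : w = z₀ := by rwa [sub_eq_zero] at h
        simp only [mem_closedBall, Complex.dist_eq] at hw
        rw [hwz, ← htdef] at hw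
        linarith
      · intro w hw
        refine DifferentiableAt.inv (by fun_prop) ?_
        intro h
        have hwz : w = z₀ := by rwa [sub_eq_zero] at h
        have := hw.1
        simp only [mem_ball, Complex.dist_eq] at this
        rw [hwz, ← htdef] at this
        linarith
    rw [this, mul_zero]
  have hIc : ∀ ρ : ℝ, 0 < ρ → ρ ≠ t → CircleIntegrable (fun w => f z₀ * (w - z₀)⁻¹) a ρ := by
    intro ρ h0 hρt
    refine ContinuousOn.circleIntegrable h0.le ?_
    have h1 : ContinuousOn (fun w : ℂ => w - z₀) (sphere a ρ) :=
      Continuous.continuousOn (continuous_sub_right z₀)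
    exact continuousOn_const.mul (h1.inv₀ (fun w hw => (hsph ρ h0 hρt w hw).2))
  have hint₂ : (∮ w in C(a, ρ₂), g w) = J₂ - f z₀ * (2 * Real.pi * Complex.I) := by
    rw [circleIntegral.integral_congr hρ₂0.le (hgs ρ₂ hρ₂0 hρ₂t),
      circleIntegral.integral_sub ((hFc ρ₂ hρ₂r₁ hρ₂b hρ₂0 hρ₂t).circleIntegrable hρ₂0.le)
        (hIc ρ₂ hρ₂0 hρ₂t),
      hinv₂, hJ₂def]
  have hint₁ : (∮ w in C(a, ρ₁), g w) = J₁ := by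
    rw [circleIntegral.integral_congr hρ₁0.le (hgs ρ₁ hρ₁0 hρ₁t),
      circleIntegral.integral_sub ((hFc ρ₁ hρ₁a hρ₁r₂ hρ₁0 hρ₁t).circleIntegrable hρ₁0.le)
        (hIc ρ₁ hρ₁0 hρ₁t),
      hinv₁, hJ₁def, sub_zero]
  rw [hint₂, hint₁, hJ₁, hJ₂, zero_sub, neg_eq_zero] at hE
  rcases mul_eq_zero.mp hE with h | h
  · exact h
  · exact absurd h Complex.two_pi_I_ne_zero
end

section
/- Let a ∈ ℂ and 0 ≤ r₁ < s < r₂, and let f be holomorphic on the annulus A = {z ∈ ℂ : r₁ < |z − a| < r₂}. If ∮_{|z−a|=s} (z − a)^n f(z) dz = 0 for every integer n ≥ 0, then f extends holomorphically to the disk D(a, r₂): there exists g holomorphic on {z : |z − a| < r₂} with g = f on A. -/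
open Metric Complex Set Filter

namespace ExtendsToDisk

lemma isOpenAnn (a : ℂ) (r₁ r₂ : ℝ) : IsOpen {z : ℂ | r₁ < ‖z - a‖ ∧ ‖z - a‖ < r₂} := by
  have hcont : Continuous fun z : ℂ => ‖z - a‖ := (continuous_id.sub continuous_const).norm
  exact (isOpen_lt continuous_const hcont).inter (isOpen_lt hcont continuous_const)

lemma annSub {a : ℂ} {r₁ r₂ t t' : ℝ} (h1 : r₁ < t) (h2 : t' < r₂) :
    closedBall a t' \ ball a t ⊆ {z : ℂ | r₁ < ‖z - a‖ ∧ ‖z - a‖ < r₂} := by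
  rintro w ⟨h1', h2'⟩
  simp only [mem_closedBall, mem_ball, dist_eq_norm, not_lt] at h1' h2'
  exact ⟨h1.trans_le h2', h1'.trans_lt h2⟩

lemma sphSub {a : ℂ} {r₁ r₂ t : ℝ} (h1 : r₁ < t) (h2 : t < r₂) :
    sphere a t ⊆ {z : ℂ | r₁ < ‖z - a‖ ∧ ‖z - a‖ < r₂} := by
  intro w hw
  rw [mem_sphere_iff_norm] at hw
  exact ⟨hw ▸ h1, hw ▸ h2⟩

lemma ind {a : ℂ} {G : ℂ → ℂ} {t t' : ℝ} (h0 : 0 < t) (hle : t ≤ t') {U : Set ℂ}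
    (hU : IsOpen U) (hsub : closedBall a t' \ ball a t ⊆ U)
    (hG : DifferentiableOn ℂ G U) :
    (∮ w in C(a, t'), G w) = ∮ w in C(a, t), G w :=
  Complex.circleIntegral_eq_of_differentiable_on_annulus_off_countable h0 hle
    Set.countable_empty (hG.continuousOn.mono hsub)
    (fun _ hw => hG.differentiableAt (hU.mem_nhds
      (hsub ((diff_subset_diff ball_subset_closedBall ball_subset_closedBall) hw.1))))

/-- the hypothesis integrals vanish at every radius in `(r₁, r₂)`. -/
lemma hv' {a : ℂ} {r₁ s r₂ : ℝ} (h₁ : 0 ≤ r₁) (h₂ : r₁ < s) (h₃ : s < r₂)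
    {f : ℂ → ℂ} (hf : DifferentiableOn ℂ f {z : ℂ | r₁ < ‖z - a‖ ∧ ‖z - a‖ < r₂})
    (hv : ∀ n : ℕ, (∮ z in C(a, s), (z - a) ^ n * f z) = 0)
    {t : ℝ} (ht₁ : r₁ < t) (ht₂ : t < r₂) (n : ℕ) :
    (∮ w in C(a, t), (w - a) ^ n * f w) = 0 := by
  have hG : DifferentiableOn ℂ (fun w => (w - a) ^ n * f w)
      {z : ℂ | r₁ < ‖z - a‖ ∧ ‖z - a‖ < r₂} :=
    (((differentiable_id.sub_const a).pow n).differentiableOn).mul hf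
  rcases le_total t s with h | h
  · rw [← ind (a := a) (h₁.trans_lt ht₁) h (isOpenAnn a r₁ r₂) (annSub ht₁ h₃) hG]
    exact hv n
  · rw [ind (a := a) (h₁.trans_lt h₂) h (isOpenAnn a r₁ r₂) (annSub h₂ ht₂) hG]
    exact hv n

/-- Key lemma: if all nonneg-power contour integrals vanish at radius `t`,
then `∮ (w-z)⁻¹ f w = 0` over the circle of radius `t` whenever `t < |z - a|`. -/
lemma inner_zero {a : ℂ} {t : ℝ} (ht0 : 0 < t)
    {f : ℂ → ℂ} (hfc : ContinuousOn f (sphere a t))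
    (hvt : ∀ n : ℕ, (∮ w in C(a, t), (w - a) ^ n * f w) = 0)
    {z : ℂ} (hz : t < ‖z - a‖) :
    (∮ w in C(a, t), (w - z)⁻¹ * f w) = 0 := by
  have hza : (0:ℝ) < ‖z - a‖ := ht0.trans hz
  have hza' : z - a ≠ 0 := by
    intro h; rw [h, norm_zero] at hza; exact lt_irrefl _ hza
  set d : ℝ := ‖z - a‖ - t with hd
  have hd0 : 0 < d := sub_pos.2 hz
  have hwz : ∀ w ∈ sphere a t, d ≤ ‖w - z‖ := by
    intro w hw
    rw [mem_sphere_iff_norm] at hw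
    calc d = ‖z - a‖ - ‖w - a‖ := by rw [hw]
      _ ≤ ‖(z - a) - (w - a)‖ := norm_sub_norm_le _ _
      _ = ‖w - z‖ := by rw [← norm_neg]; ring_nf
  have hwz0 : ∀ w ∈ sphere a t, w - z ≠ 0 := by
    intro w hw h
    have := hwz w hw
    rw [h, norm_zero] at this
    exact hd0.not_ge this
  obtain ⟨M, hM⟩ := (isCompact_sphere a t).exists_bound_of_continuousOn hfc
  set q : ℝ := t / ‖z - a‖ with hq
  have hq0 : 0 ≤ q := div_nonneg ht0.le hza.le
  have hq1 : q < 1 := (div_lt_one hza).2 hz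
  set R : ℕ → ℂ := fun N => ∮ w in C(a, t), ((w - a) / (z - a)) ^ N * ((w - z)⁻¹ * f w) with hR
  have hint : ∀ N : ℕ, CircleIntegrable
      (fun w => ((w - a) / (z - a)) ^ N * ((w - z)⁻¹ * f w)) a t := by
    intro N
    apply ContinuousOn.circleIntegrable ht0.le
    exact ((((continuousOn_id.sub continuousOn_const).div_const _).pow N)).mul
      ((((continuousOn_id.sub continuousOn_const).inv₀ hwz0)).mul hfc)
  have hint2 : ∀ N : ℕ, CircleIntegrable
      (fun w => -(z - a)⁻¹ ^ (N + 1) * ((w - a) ^ N * f w)) a t := by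
    intro N
    apply ContinuousOn.circleIntegrable ht0.le
    exact continuousOn_const.mul
      ((((continuousOn_id.sub continuousOn_const)).pow N).mul hfc)
  have key : ∀ N, R N = R 0 := by
    intro N
    induction N with
    | zero => rfl
    | succ N ih =>
      have eqn : EqOn (fun w => ((w - a) / (z - a)) ^ (N + 1) * ((w - z)⁻¹ * f w))
          (fun w => ((w - a) / (z - a)) ^ N * ((w - z)⁻¹ * f w)
            - -(z - a)⁻¹ ^ (N + 1) * ((w - a) ^ N * f w)) (sphere a t) := by
        intro w hw
        have h1 := hwz0 w hw
        simp only []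
        rw [div_pow, div_pow, inv_pow]
        field_simp
        ring
      have step : R (N + 1)
          = R N - -(z - a)⁻¹ ^ (N + 1) * ∮ w in C(a, t), (w - a) ^ N * f w := by
        rw [hR]
        simp only
        rw [circleIntegral.integral_congr ht0.le eqn,
          circleIntegral.integral_sub (hint N) (hint2 N),
          circleIntegral.integral_const_mul]
      rw [step, hvt N, mul_zero, sub_zero, ih]
  have hbound : ∀ N, ‖R N‖ ≤ 2 * Real.pi * t * (q ^ N * (d⁻¹ * M)) := by
    intro N
    apply circleIntegral.norm_integral_le_of_norm_le_const ht0.le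
    intro w hw
    have h₄ := hwz w hw
    have h₅ := hM w hw
    have hwa : ‖w - a‖ = t := mem_sphere_iff_norm.1 hw
    rw [norm_mul, norm_mul, norm_pow, norm_div, hwa, norm_inv, ← hq]
    have hinv : ‖w - z‖⁻¹ ≤ d⁻¹ := inv_anti₀ hd0 h₄
    gcongr
  have hlim : Tendsto (fun N => 2 * Real.pi * t * (q ^ N * (d⁻¹ * M))) atTop (nhds 0) := by
    have := (tendsto_pow_atTop_nhds_zero_of_lt_one hq0 hq1).mul_const (d⁻¹ * M)
    have := this.const_mul (2 * Real.pi * t)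
    simpa using this
  have hR0 : Tendsto R atTop (nhds 0) := squeeze_zero_norm hbound hlim
  have hRc : Tendsto R atTop (nhds (R 0)) := by
    have : R = fun _ => R 0 := funext key
    rw [this]; exact tendsto_const_nhds
  have : R 0 = 0 := tendsto_nhds_unique hRc hR0
  calc (∮ w in C(a, t), (w - z)⁻¹ * f w) = R 0 := by
        rw [hR]; simp only [pow_zero, one_mul]
    _ = 0 := this

/-- Splitting `∮ (w-z)⁻¹ (f w - f z)` into two integrals. -/
lemma split {a z : ℂ} {t : ℝ} (ht0 : 0 < t) {f : ℂ → ℂ}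
    (hfc : ContinuousOn f (sphere a t)) (hzt : ∀ w ∈ sphere a t, w - z ≠ 0) :
    (∮ w in C(a, t), (w - z)⁻¹ * (f w - f z))
      = (∮ w in C(a, t), (w - z)⁻¹ * f w) - (∮ w in C(a, t), (w - z)⁻¹) * f z := by
  have hinv : ContinuousOn (fun w : ℂ => (w - z)⁻¹) (sphere a t) :=
    (continuousOn_id.sub continuousOn_const).inv₀ hzt
  have h1 : CircleIntegrable (fun w => (w - z)⁻¹ * f w) a t :=
    (hinv.mul hfc).circleIntegrable ht0.le
  have h2 : CircleIntegrable (fun w => (w - z)⁻¹ * f z) a t :=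
    (hinv.mul continuousOn_const).circleIntegrable ht0.le
  have : (∮ w in C(a, t), (w - z)⁻¹ * (f w - f z))
      = ∮ w in C(a, t), ((w - z)⁻¹ * f w - (w - z)⁻¹ * f z) := by
    apply circleIntegral.integral_congr ht0.le
    intro w _
    simp [mul_sub]
  rw [this, circleIntegral.integral_sub h1 h2]
  congr 1
  have := circleIntegral.integral_smul_const (fun w : ℂ => (w - z)⁻¹) (f z) a t
  simpa [smul_eq_mul] using this

/-- Cauchy formula on the annulus, using the vanishing of the inner integral. -/
lemma outer {a : ℂ} {r₁ s r₂ : ℝ} (h₁ : 0 ≤ r₁) (h₂ : r₁ < s) (h₃ : s < r₂)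
    {f : ℂ → ℂ} (hf : DifferentiableOn ℂ f {z : ℂ | r₁ < ‖z - a‖ ∧ ‖z - a‖ < r₂})
    (hv : ∀ n : ℕ, (∮ z in C(a, s), (z - a) ^ n * f z) = 0)
    {z : ℂ} (hz : z ∈ {z : ℂ | r₁ < ‖z - a‖ ∧ ‖z - a‖ < r₂})
    {t₂ : ℝ} (ha2 : ‖z - a‖ < t₂) (hb2 : t₂ < r₂) :
    (∮ w in C(a, t₂), (w - z)⁻¹ * f w) = (2 * Real.pi * I) * f z := by
  obtain ⟨hz1, hz2⟩ := hz
  set t₁ : ℝ := (r₁ + ‖z - a‖) / 2 with ht₁def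
  have hti : r₁ < t₁ := by rw [ht₁def]; linarith
  have ht1z : t₁ < ‖z - a‖ := by rw [ht₁def]; linarith
  have ht10 : 0 < t₁ := h₁.trans_lt hti
  have ht12 : t₁ ≤ t₂ := le_of_lt (ht1z.trans ha2)
  have ht1r2 : t₁ < r₂ := lt_of_lt_of_le (lt_of_lt_of_le ht1z ha2.le) hb2.le
  have hzA : z ∈ {z : ℂ | r₁ < ‖z - a‖ ∧ ‖z - a‖ < r₂} := ⟨hz1, hz2⟩
  have hG : DifferentiableOn ℂ (dslope f z) {z : ℂ | r₁ < ‖z - a‖ ∧ ‖z - a‖ < r₂} :=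
    (Complex.differentiableOn_dslope ((isOpenAnn a r₁ r₂).mem_nhds hzA)).mpr hf
  have hind : (∮ w in C(a, t₂), dslope f z w) = ∮ w in C(a, t₁), dslope f z w :=
    ind ht10 ht12 (isOpenAnn a r₁ r₂) (annSub hti hb2) hG
  -- nonvanishing on spheres
  have hne₁ : ∀ w ∈ sphere a t₁, w - z ≠ 0 := by
    intro w hw h
    rw [mem_sphere_iff_norm] at hw
    rw [sub_eq_zero] at h
    rw [h] at hw
    exact (hw ▸ ht1z).false
  have hne₂ : ∀ w ∈ sphere a t₂, w - z ≠ 0 := by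
    intro w hw h
    rw [mem_sphere_iff_norm] at hw
    rw [sub_eq_zero] at h
    rw [h] at hw
    exact (hw ▸ ha2).false.elim
  -- replace dslope by the explicit formula on each circle
  have hcongr : ∀ t : ℝ, 0 ≤ t → (∀ w ∈ sphere a t, w - z ≠ 0) →
      (∮ w in C(a, t), dslope f z w) = ∮ w in C(a, t), (w - z)⁻¹ * (f w - f z) := by
    intro t ht hne
    apply circleIntegral.integral_congr ht
    intro w hw
    have hwz : w ≠ z := sub_ne_zero.1 (hne w hw)
    rw [dslope_of_ne f hwz, slope_def_field, div_eq_inv_mul]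
  have hfc₁ : ContinuousOn f (sphere a t₁) := hf.continuousOn.mono (sphSub hti ht1r2)
  have hfc₂ : ContinuousOn f (sphere a t₂) :=
    hf.continuousOn.mono (sphSub (hti.trans_le (ht1z.le.trans ha2.le)) hb2)
  have ht20 : 0 < t₂ := ht10.trans_le ht12
  -- the outer circle
  have E2 : (∮ w in C(a, t₂), dslope f z w)
      = (∮ w in C(a, t₂), (w - z)⁻¹ * f w) - (2 * Real.pi * I) * f z := by
    rw [hcongr t₂ ht20.le hne₂, split ht20 hfc₂ hne₂,
      circleIntegral.integral_sub_inv_of_mem_ball (by rwa [mem_ball, dist_eq_norm])]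
  -- the inner circle
  have E1 : (∮ w in C(a, t₁), dslope f z w) = 0 := by
    rw [hcongr t₁ ht10.le hne₁, split ht10 hfc₁ hne₁]
    have i1 : (∮ w in C(a, t₁), (w - z)⁻¹ * f w) = 0 :=
      inner_zero ht10 hfc₁ (fun n => hv' h₁ h₂ h₃ hf hv hti ht1r2 n) ht1z
    have i2 : (∮ w in C(a, t₁), (w - z)⁻¹) = 0 := by
      apply Complex.circleIntegral_eq_zero_of_differentiable_on_off_countable ht10.le
        Set.countable_empty
      · apply ContinuousOn.inv₀ (continuousOn_id.sub continuousOn_const)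
        intro w hw h
        rw [mem_closedBall, dist_eq_norm] at hw
        rw [Pi.sub_apply, sub_eq_zero] at h
        simp only [id_eq] at h
        rw [h] at hw
        exact (lt_irrefl _ (lt_of_lt_of_le ht1z hw)).elim
      · intro x hx
        apply DifferentiableAt.inv (differentiableAt_id.sub_const z)
        intro h
        rw [sub_eq_zero] at h
        simp only [id_eq] at h
        have := hx.1
        rw [mem_ball, dist_eq_norm, h] at this
        exact (lt_irrefl _ (ht1z.trans this)).elim
    rw [i1, i2, zero_mul, sub_zero]
  have : (∮ w in C(a, t₂), (w - z)⁻¹ * f w) - (2 * Real.pi * I) * f z = 0 := by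
    rw [← E2, hind, E1]
  exact sub_eq_zero.1 this


lemma welldef {a z : ℂ} {r₁ r₂ : ℝ} (h₁ : 0 ≤ r₁)
    {f : ℂ → ℂ} (hf : DifferentiableOn ℂ f {z : ℂ | r₁ < ‖z - a‖ ∧ ‖z - a‖ < r₂})
    {t t' : ℝ} (ht : max r₁ ‖z - a‖ < t) (ht' : max r₁ ‖z - a‖ < t')
    (h2 : t < r₂) (h2' : t' < r₂) :
    (∮ w in C(a, t'), (w - z)⁻¹ * f w) = ∮ w in C(a, t), (w - z)⁻¹ * f w := by
  set U : Set ℂ := {w : ℂ | r₁ < ‖w - a‖ ∧ ‖w - a‖ < r₂} \ {z} with hU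
  have hUopen : IsOpen U := (isOpenAnn a r₁ r₂).sdiff isClosed_singleton
  have hGU : DifferentiableOn ℂ (fun w => (w - z)⁻¹ * f w) U := by
    apply DifferentiableOn.mul
    · apply DifferentiableOn.inv (differentiableOn_id.sub (differentiableOn_const z))
      intro w hw
      simp only [Pi.sub_apply, id_eq]
      exact sub_ne_zero.2 (fun h => hw.2 (by simp [h]))
    · exact hf.mono diff_subset
  have claim : ∀ u v : ℝ, max r₁ ‖z - a‖ < u → u ≤ v → v < r₂ →
      (∮ w in C(a, v), (w - z)⁻¹ * f w) = ∮ w in C(a, u), (w - z)⁻¹ * f w := by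
    intro u v hu huv hv
    have hru : r₁ < u := lt_of_le_of_lt (le_max_left _ _) hu
    have hzu : ‖z - a‖ < u := lt_of_le_of_lt (le_max_right _ _) hu
    have hu0 : 0 < u := h₁.trans_lt hru
    apply ind hu0 huv hUopen _ hGU
    intro w hw
    refine ⟨annSub hru hv hw, ?_⟩
    intro hwz
    rw [mem_singleton_iff] at hwz
    have h1' := hw.2
    rw [mem_ball, dist_eq_norm, not_lt, hwz] at h1'
    exact (lt_irrefl _ (hzu.trans_le h1')).elim
  rcases le_total t t' with h | h
  · exact claim t t' ht h h2'
  · exact (claim t' t ht' h h2).symm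

end ExtendsToDisk

open Metric ExtendsToDisk

/-- a holomorphic function on an annulus whose Laurent coefficients of
nonnegative index-weight (the contour integrals `∮ (z-a)^n f dz`, `n ≥ 0`) all vanish
extends holomorphically to the full disk `D(a, r₂)`. -/
theorem extends_to_disk_of_principal_part_vanishes
    (a : ℂ) (r₁ s r₂ : ℝ) (h₁ : 0 ≤ r₁) (h₂ : r₁ < s) (h₃ : s < r₂)
    (f : ℂ → ℂ)
    (hf : DifferentiableOn ℂ f {z : ℂ | r₁ < ‖z - a‖ ∧ ‖z - a‖ < r₂})
    (hv : ∀ n : ℕ, (∮ z in C(a, s), (z - a) ^ n * f z) = 0) :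
    ∃ g : ℂ → ℂ, DifferentiableOn ℂ g (ball a r₂) ∧
      ∀ z ∈ {z : ℂ | r₁ < ‖z - a‖ ∧ ‖z - a‖ < r₂}, g z = f z := by
  have hr₁r₂ : r₁ < r₂ := h₂.trans h₃
  set g : ℂ → ℂ := fun z =>
    (2 * Real.pi * Complex.I : ℂ)⁻¹ *
      ∮ w in C(a, (max r₁ ‖z - a‖ + r₂) / 2), (w - z)⁻¹ * f w with hg
  refine ⟨g, ?_, ?_⟩
  · intro z₀ hz₀
    rw [mem_ball, dist_eq_norm] at hz₀
    set t : ℝ := (max r₁ ‖z₀ - a‖ + r₂) / 2 with htdef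
    have hmax : max r₁ ‖z₀ - a‖ < r₂ := max_lt hr₁r₂ hz₀
    have h5 : max r₁ ‖z₀ - a‖ < t := by rw [htdef]; linarith
    have h6 : t < r₂ := by rw [htdef]; linarith
    have hr₁t : r₁ < t := lt_of_le_of_lt (le_max_left _ _) h5
    have ht0 : 0 < t := h₁.trans_lt hr₁t
    have hz₀t : ‖z₀ - a‖ < t := lt_of_le_of_lt (le_max_right _ _) h5
    have hfi : CircleIntegrable f a t :=
      (hf.continuousOn.mono (sphSub hr₁t h6)).circleIntegrable ht0.le
    set T : NNReal := t.toNNReal with hT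
    have hTt : (T : ℝ) = t := Real.coe_toNNReal t ht0.le
    have hT0 : 0 < T := Real.toNNReal_pos.2 ht0
    have hfi' : CircleIntegrable f a (T : ℝ) := by rwa [hTt]
    have hps := hasFPowerSeriesOn_cauchy_integral (f := f) (c := a) hfi' hT0
    have hFd := hps.differentiableOn
    rw [Metric.emetric_ball_nnreal, hTt] at hFd
    have hz₀ball : z₀ ∈ ball a t := by rw [mem_ball, dist_eq_norm]; exact hz₀t
    have hFat : DifferentiableAt ℂ
        (fun w => (2 * Real.pi * Complex.I : ℂ)⁻¹ • ∮ u in C(a, t), (u - w)⁻¹ • f u) z₀ :=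
      hFd.differentiableAt (isOpen_ball.mem_nhds hz₀ball)
    have heq : ∀ z ∈ ball a t, g z
        = (2 * Real.pi * Complex.I : ℂ)⁻¹ • ∮ u in C(a, t), (u - z)⁻¹ • f u := by
      intro z hzball
      rw [mem_ball, dist_eq_norm] at hzball
      have hmz : max r₁ ‖z - a‖ < t := max_lt hr₁t hzball
      have hmzr : max r₁ ‖z - a‖ < r₂ := hmz.trans h6
      have hmz2 : max r₁ ‖z - a‖ < (max r₁ ‖z - a‖ + r₂) / 2 := by linarith
      have hrad2 : (max r₁ ‖z - a‖ + r₂) / 2 < r₂ := by linarith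
      rw [hg]
      simp only
      rw [welldef h₁ hf hmz hmz2 h6 hrad2]
      simp [smul_eq_mul]
    have hev : g =ᶠ[nhds z₀]
        fun w => (2 * Real.pi * Complex.I : ℂ)⁻¹ • ∮ u in C(a, t), (u - w)⁻¹ • f u :=
      Filter.eventuallyEq_of_mem (isOpen_ball.mem_nhds hz₀ball) heq
    exact (hev.differentiableAt_iff.2 hFat).differentiableWithinAt
  · intro z hz
    have hz2 : ‖z - a‖ < r₂ := hz.2
    have hmax : max r₁ ‖z - a‖ < r₂ := max_lt hr₁r₂ hz2
    have hzt2 : ‖z - a‖ < (max r₁ ‖z - a‖ + r₂) / 2 := by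
      have h := le_max_right r₁ ‖z - a‖
      linarith
    have ht2r2 : (max r₁ ‖z - a‖ + r₂) / 2 < r₂ := by linarith
    rw [hg]
    simp only
    rw [outer h₁ h₂ h₃ hf hv hz hzt2 ht2r2, inv_mul_cancel_left₀ Complex.two_pi_I_ne_zero]
end

section
/- Let a ∈ ℂ and 0 ≤ r₁ < r₂, and let f be holomorphic on the annulus A = {z ∈ ℂ : r₁ < |z − a| < r₂}. Then there exist a function g holomorphic on the disk {z : |z − a| < r₂} and a function h holomorphic on {z : |z − a| > r₁} with h(z) → 0 as |z| → ∞, such that f = g + h on A; moreover the pair (g, h) with these properties is unique. -/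
open Metric Filter Set Complex Asymptotics Real

/-- Differentiability of a Cauchy-kernel circle integral off the circle. -/
lemma diffAt_cauchy_kernel_integral {a z : ℂ} {ρ : ℝ} (hρ : 0 ≤ ρ) {f : ℂ → ℂ}
    (hf : ContinuousOn f (sphere a ρ)) (hz : ‖z - a‖ ≠ ρ) :
    DifferentiableAt ℂ (fun z => ∮ w in C(a, ρ), (w - z)⁻¹ • f w) z := by
  obtain ⟨C, hC⟩ := (isCompact_sphere a ρ).exists_bound_of_continuousOn hf
  set M : ℝ := max C 0 with hMdef
  have hM0 : 0 ≤ M := le_max_right _ _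
  have hMb : ∀ w ∈ sphere a ρ, ‖f w‖ ≤ M := fun w hw => (hC w hw).trans (le_max_left _ _)
  set d : ℝ := |ρ - ‖z - a‖| with hddef
  have hd : 0 < d := abs_pos.2 (sub_ne_zero.2 (Ne.symm hz))
  have hwz : ∀ w ∈ sphere a ρ, d ≤ ‖w - z‖ := by
    intro w hw
    have hwa : ‖w - a‖ = ρ := by rwa [mem_sphere, dist_eq_norm] at hw
    have := abs_norm_sub_norm_le (w - a) (z - a)
    simp only [hwa, sub_sub_sub_cancel_right] at this
    exact this
  have hzs : ∀ w ∈ sphere a ρ, w ≠ z := fun w hw h => by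
    have h2 := hwz w hw; rw [h, sub_self, norm_zero] at h2; linarith
  have hc2 : ContinuousOn (fun w => (w - z)⁻¹ • f w) (sphere a ρ) :=
    ((continuousOn_id.sub continuousOn_const).inv₀
      (fun w hw => sub_ne_zero.2 (hzs w hw))).smul hf
  have hc3 : ContinuousOn (fun w => ((w - z) ^ 2)⁻¹ • f w) (sphere a ρ) :=
    (((continuousOn_id.sub continuousOn_const).pow 2).inv₀
      (fun w hw => pow_ne_zero _ (sub_ne_zero.2 (hzs w hw)))).smul hf
  set D : ℂ := ∮ w in C(a, ρ), ((w - z) ^ 2)⁻¹ • f w with hDdef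
  set K : ℝ := 2 * π * ρ * (((d / 2)⁻¹ * (d ^ 2)⁻¹) * M) + 1 with hKdef
  have hK : 0 < K := by positivity
  have hKc : 2 * π * ρ * (((d / 2)⁻¹ * (d ^ 2)⁻¹) * M) ≤ K := by
    rw [hKdef]; linarith
  have hder : HasDerivAt (fun z => ∮ w in C(a, ρ), (w - z)⁻¹ • f w) D z := by
    rw [hasDerivAt_iff_isLittleO, isLittleO_iff]
    intro ε hε
    have hεK : 0 < min (d / 2) (ε / K) := lt_min (by positivity) (by positivity)
    filter_upwards [Metric.ball_mem_nhds z hεK] with z' hz'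
    rw [mem_ball, dist_eq_norm] at hz'
    have hz'd : ‖z' - z‖ < d / 2 := lt_of_lt_of_le hz' (min_le_left _ _)
    have hz'e : ‖z' - z‖ ≤ ε / K := le_of_lt (lt_of_lt_of_le hz' (min_le_right _ _))
    have hge' : ∀ w ∈ sphere a ρ, d / 2 ≤ ‖w - z'‖ := by
      intro w hw
      have h1 := hwz w hw
      have h2 : ‖w - z‖ ≤ ‖w - z'‖ + ‖z' - z‖ := by
        have e : w - z = w - z' + (z' - z) := by ring
        rw [e]; exact norm_add_le _ _
      linarith
    have hzs' : ∀ w ∈ sphere a ρ, w ≠ z' := fun w hw h => by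
      have h2 := hge' w hw; rw [h, sub_self, norm_zero] at h2; linarith
    have hc1 : ContinuousOn (fun w => (w - z')⁻¹ • f w) (sphere a ρ) :=
      ((continuousOn_id.sub continuousOn_const).inv₀
        (fun w hw => sub_ne_zero.2 (hzs' w hw))).smul hf
    have hI : (∮ w in C(a, ρ), (w - z')⁻¹ • f w) - (∮ w in C(a, ρ), (w - z)⁻¹ • f w)
        - (z' - z) • D
        = ∮ w in C(a, ρ), ((w - z')⁻¹ - (w - z)⁻¹ - (z' - z) * ((w - z) ^ 2)⁻¹) • f w := by
      have e1 : (∮ w in C(a, ρ), ((w - z')⁻¹ - (w - z)⁻¹ - (z' - z) * ((w - z) ^ 2)⁻¹) • f w)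
          = ∮ w in C(a, ρ), ((w - z')⁻¹ • f w - (w - z)⁻¹ • f w)
              - (z' - z) • (((w - z) ^ 2)⁻¹ • f w) :=
        circleIntegral.integral_congr hρ fun w _ => by simp only [smul_eq_mul]; ring
      rw [e1, circleIntegral.integral_sub (f := fun w => (w - z')⁻¹ • f w - (w - z)⁻¹ • f w)
          (g := fun w => (z' - z) • (((w - z) ^ 2)⁻¹ • f w)) ((hc1.sub hc2).circleIntegrable hρ)
          ((hc3.const_smul (z' - z)).circleIntegrable hρ),
        circleIntegral.integral_sub (hc1.circleIntegrable hρ) (hc2.circleIntegrable hρ),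
        circleIntegral.integral_smul]
    rw [hI]
    have hbound : ∀ w ∈ sphere a ρ,
        ‖((w - z')⁻¹ - (w - z)⁻¹ - (z' - z) * ((w - z) ^ 2)⁻¹) • f w‖
          ≤ ‖z' - z‖ ^ 2 * ((d / 2)⁻¹ * (d ^ 2)⁻¹) * M := by
      intro w hw
      have h3 := hwz w hw
      have h2 := hge' w hw
      have hne1 : w - z ≠ 0 := sub_ne_zero.2 (hzs w hw)
      have hne2 : w - z' ≠ 0 := sub_ne_zero.2 (hzs' w hw)
      have hid : (w - z')⁻¹ - (w - z)⁻¹ - (z' - z) * ((w - z) ^ 2)⁻¹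
          = (z' - z) ^ 2 * ((w - z')⁻¹ * ((w - z) ^ 2)⁻¹) := by
        field_simp
        ring
      rw [hid, smul_eq_mul]
      have e2 : ‖(z' - z) ^ 2 * ((w - z')⁻¹ * ((w - z) ^ 2)⁻¹) * f w‖
          = ‖z' - z‖ ^ 2 * (‖w - z'‖⁻¹ * (‖w - z‖ ^ 2)⁻¹) * ‖f w‖ := by
        simp [norm_mul, norm_inv, norm_pow]
      rw [e2]
      have hfw := hMb w hw
      have hb1 : ‖w - z'‖⁻¹ ≤ (d / 2)⁻¹ := inv_anti₀ (by positivity) h2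
      have hb2 : (‖w - z‖ ^ 2)⁻¹ ≤ (d ^ 2)⁻¹ :=
        inv_anti₀ (by positivity) (pow_le_pow_left₀ hd.le h3 2)
      exact mul_le_mul (mul_le_mul le_rfl (mul_le_mul hb1 hb2 (by positivity)
        (by positivity)) (by positivity) (by positivity)) hfw (norm_nonneg _) (by positivity)
    calc ‖∮ w in C(a, ρ), ((w - z')⁻¹ - (w - z)⁻¹ - (z' - z) * ((w - z) ^ 2)⁻¹) • f w‖
        ≤ 2 * π * ρ * (‖z' - z‖ ^ 2 * ((d / 2)⁻¹ * (d ^ 2)⁻¹) * M) :=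
          circleIntegral.norm_integral_le_of_norm_le_const hρ hbound
      _ = (2 * π * ρ * (((d / 2)⁻¹ * (d ^ 2)⁻¹) * M)) * ‖z' - z‖ * ‖z' - z‖ := by ring
      _ ≤ K * (ε / K) * ‖z' - z‖ := by
          apply mul_le_mul_of_nonneg_right _ (norm_nonneg _)
          exact mul_le_mul hKc hz'e (norm_nonneg _) hK.le
      _ = ε * ‖z' - z‖ := by rw [mul_div_cancel₀ _ hK.ne']
  exact hder.differentiableAt
section LaurentMain

open Metric Filter Set Complex Asymptotics Real

/-- Laurent decomposition `f = g + h` of a holomorphic function on an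
annulus, with `g` holomorphic on the inner disk, `h` holomorphic outside the inner
circle and tending to `0` at infinity; the pair `(g, h)` is unique (as functions on
those domains). -/
theorem laurent_decomposition
    (a : ℂ) (r₁ r₂ : ℝ) (h₁ : 0 ≤ r₁) (h₂ : r₁ < r₂)
    (f : ℂ → ℂ)
    (hf : DifferentiableOn ℂ f {z : ℂ | r₁ < ‖z - a‖ ∧ ‖z - a‖ < r₂}) :
    ∃ g h : ℂ → ℂ,
      (DifferentiableOn ℂ g (ball a r₂) ∧
       DifferentiableOn ℂ h {z : ℂ | r₁ < ‖z - a‖} ∧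
       Tendsto h (Bornology.cobounded ℂ) (nhds 0) ∧
       ∀ z ∈ {z : ℂ | r₁ < ‖z - a‖ ∧ ‖z - a‖ < r₂}, f z = g z + h z) ∧
      ∀ g' h' : ℂ → ℂ,
        (DifferentiableOn ℂ g' (ball a r₂) ∧
         DifferentiableOn ℂ h' {z : ℂ | r₁ < ‖z - a‖} ∧
         Tendsto h' (Bornology.cobounded ℂ) (nhds 0) ∧
         ∀ z ∈ {z : ℂ | r₁ < ‖z - a‖ ∧ ‖z - a‖ < r₂}, f z = g' z + h' z) →
        Set.EqOn g g' (ball a r₂) ∧ Set.EqOn h h' {z : ℂ | r₁ < ‖z - a‖} := by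
  set A : Set ℂ := {z : ℂ | r₁ < ‖z - a‖ ∧ ‖z - a‖ < r₂} with hAdef
  have hAopen : IsOpen A := by
    have : A = (fun z : ℂ => ‖z - a‖) ⁻¹' Ioo r₁ r₂ := by
      ext z; simp [hAdef, Ioo]
    rw [this]
    exact ((continuous_sub_right a).norm).isOpen_preimage _ isOpen_Ioo
  have hfc : ContinuousOn f A := hf.continuousOn
  have hfA : ∀ z ∈ A, DifferentiableAt ℂ f z := fun z hz =>
    hf.differentiableAt (hAopen.mem_nhds hz)
  -- the family of Cauchy integrals
  set G : ℝ → ℂ → ℂ := fun ρ z => ∮ w in C(a, ρ), (w - z)⁻¹ • f w with hGdef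
  -- the closed annulus between two radii is inside A
  have hsubA : ∀ ρ ρ' : ℝ, r₁ < ρ → ρ' < r₂ → closedBall a ρ' \ ball a ρ ⊆ A := by
    intro ρ ρ' hρ hρ' w hw
    obtain ⟨hw1, hw2⟩ := hw
    rw [mem_closedBall, dist_eq_norm] at hw1
    rw [mem_ball, dist_eq_norm, not_lt] at hw2
    exact ⟨lt_of_lt_of_le hρ hw2, lt_of_le_of_lt hw1 hρ'⟩
  have hsphA : ∀ ρ : ℝ, r₁ < ρ → ρ < r₂ → sphere a ρ ⊆ A := by
    intro ρ hρ hρ' w hw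
    rw [mem_sphere, dist_eq_norm] at hw
    exact ⟨hw ▸ hρ, hw ▸ hρ'⟩
  -- invariance of the Cauchy integral under change of radius
  have K : ∀ ρ ρ' : ℝ, r₁ < ρ → ρ ≤ ρ' → ρ' < r₂ → ∀ z : ℂ,
      z ∉ closedBall a ρ' \ ball a ρ → G ρ' z = G ρ z := by
    intro ρ ρ' hρ hle hρ' z hz
    refine circleIntegral_eq_of_differentiable_on_annulus_off_countable
      (lt_of_le_of_lt h₁ hρ) hle (countable_singleton z) ?_ ?_
    · refine ContinuousOn.smul ((continuousOn_id.sub continuousOn_const).inv₀ ?_)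
        (hfc.mono (hsubA ρ ρ' hρ hρ'))
      intro w hw
      exact sub_ne_zero.2 (fun hwz => hz ((show w = z from hwz) ▸ hw))
    · intro w hw
      obtain ⟨hw1, hw2⟩ := hw
      have hwmem : w ∈ closedBall a ρ' \ ball a ρ :=
        ⟨ball_subset_closedBall hw1.1, fun hb => hw1.2 (ball_subset_closedBall hb)⟩
      have hwA : w ∈ A := hsubA ρ ρ' hρ hρ' hwmem
      have hwz : w ≠ z := fun hwz => hz (hwz ▸ hwmem)
      exact ((differentiableAt_id.sub_const z).inv (sub_ne_zero.2 hwz)).smul (hfA w hwA)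
  -- the Cauchy formula on the annulus
  have CF : ∀ z ∈ A, ∀ ρ₁' ρ₂' : ℝ, r₁ < ρ₁' → ρ₁' < ‖z - a‖ → ‖z - a‖ < ρ₂' → ρ₂' < r₂ →
      G ρ₂' z - G ρ₁' z = (2 * π * I : ℂ) • f z := by
    intro z hz ρ₁' ρ₂' H1 H2 H3 H4
    have hρ₁0 : 0 < ρ₁' := lt_of_le_of_lt h₁ H1
    have hρ₂0 : 0 < ρ₂' := lt_trans hρ₁0 (lt_trans H2 H3)
    have hle : ρ₁' ≤ ρ₂' := le_of_lt (lt_trans H2 H3)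
    have hsub : closedBall a ρ₂' \ ball a ρ₁' ⊆ A := hsubA ρ₁' ρ₂' H1 H4
    -- every point of the closed annulus is in A, so f is differentiable there
    have hdsl : (∮ w in C(a, ρ₂'), dslope f z w) = ∮ w in C(a, ρ₁'), dslope f z w := by
      refine circleIntegral_eq_of_differentiable_on_annulus_off_countable
        hρ₁0 hle (countable_singleton z) ?_ ?_
      · intro w hw
        rcases eq_or_ne w z with rfl | hwz
        · exact (continuousAt_dslope_same.2 (hfA w (hsub hw))).continuousWithinAt
        · exact (((continuousAt_dslope_of_ne hwz).2
            (hfA w (hsub hw)).continuousAt)).continuousWithinAt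
      · intro w hw
        have hwA : w ∈ A :=
          hsub ⟨ball_subset_closedBall hw.1.1, fun hb => hw.1.2 (ball_subset_closedBall hb)⟩
        have hwz : w ≠ z := hw.2
        exact (differentiableAt_dslope_of_ne hwz).2 (hfA w hwA)
    -- rewrite each dslope integral
    have hsne : ∀ ρ : ℝ, ρ ≠ ‖z - a‖ → ∀ w ∈ sphere a ρ, w ≠ z := by
      intro ρ hρ w hw hwz
      rw [mem_sphere, dist_eq_norm, hwz] at hw
      exact hρ hw.symm
    have hrw : ∀ ρ : ℝ, 0 < ρ → r₁ < ρ → ρ < r₂ → ρ ≠ ‖z - a‖ →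
        (∮ w in C(a, ρ), dslope f z w)
          = G ρ z - (∮ w in C(a, ρ), (w - z)⁻¹) • f z := by
      intro ρ hρ0 hρ1 hρ2 hρz
      have hne := hsne ρ hρz
      have hcρ : ContinuousOn (fun w => (w - z)⁻¹ • f w) (sphere a ρ) :=
        ((continuousOn_id.sub continuousOn_const).inv₀
          (fun w hw => sub_ne_zero.2 (hne w hw))).smul (hfc.mono (hsphA ρ hρ1 hρ2))
      have hcρ' : ContinuousOn (fun w => (w - z)⁻¹ • f z) (sphere a ρ) :=
        ((continuousOn_id.sub continuousOn_const).inv₀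
          (fun w hw => sub_ne_zero.2 (hne w hw))).smul continuousOn_const
      have e1 : (∮ w in C(a, ρ), dslope f z w)
          = ∮ w in C(a, ρ), ((w - z)⁻¹ • f w - (w - z)⁻¹ • f z) := by
        refine circleIntegral.integral_congr hρ0.le fun w hw => ?_
        rw [dslope_of_ne f (hne w hw), slope_def_module, smul_sub]
      rw [e1, circleIntegral.integral_sub (hcρ.circleIntegrable hρ0.le)
        (hcρ'.circleIntegrable hρ0.le)]
      congr 1
      exact circleIntegral.integral_smul_const (fun w => (w - z)⁻¹) (f z) a ρ
    have hin : (∮ w in C(a, ρ₂'), (w - z)⁻¹) = (2 * π * I : ℂ) := by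
      apply circleIntegral.integral_sub_inv_of_mem_ball
      rw [mem_ball, dist_eq_norm]; exact H3
    have hout : (∮ w in C(a, ρ₁'), (w - z)⁻¹) = 0 := by
      refine circleIntegral_eq_zero_of_differentiable_on_off_countable hρ₁0.le
        countable_empty ?_ ?_
      · refine (continuousOn_id.sub continuousOn_const).inv₀ ?_
        intro w hw
        rw [mem_closedBall, dist_eq_norm] at hw
        exact sub_ne_zero.2 fun hwz => absurd (((show w = z from hwz) ▸ hw : ‖z - a‖ ≤ ρ₁')) (not_le.2 H2)
      · intro w hw
        rw [mem_diff, mem_ball, dist_eq_norm] at hw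
        refine (differentiableAt_id.sub_const z).inv (sub_ne_zero.2 ?_)
        rintro rfl
        exact absurd hw.1.le (not_le.2 H2)
    rw [hrw ρ₂' hρ₂0 (lt_trans H1 (lt_trans H2 H3)) H4 (ne_of_gt H3),
      hrw ρ₁' hρ₁0 H1 (lt_trans (lt_trans H2 H3) H4) (ne_of_lt H2), hin, hout] at hdsl
    rw [zero_smul, sub_zero] at hdsl
    linear_combination hdsl
  -- the chosen radii
  set ρg : ℂ → ℝ := fun z => (max ‖z - a‖ r₁ + r₂) / 2 with hρgdef
  set ρh : ℂ → ℝ := fun z => (r₁ + min ‖z - a‖ r₂) / 2 with hρhdef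
  have hρg1 : ∀ z : ℂ, ‖z - a‖ < r₂ → r₁ < ρg z ∧ ρg z < r₂ ∧ ‖z - a‖ < ρg z := by
    intro z hz
    have h1 : r₁ ≤ max ‖z - a‖ r₁ := le_max_right _ _
    have h2 : max ‖z - a‖ r₁ < r₂ := max_lt hz h₂
    have h3 : ‖z - a‖ ≤ max ‖z - a‖ r₁ := le_max_left _ _
    constructor
    · simp only [hρgdef]; linarith
    constructor
    · simp only [hρgdef]; linarith
    · simp only [hρgdef]; linarith
  have hρh1 : ∀ z : ℂ, r₁ < ‖z - a‖ → r₁ < ρh z ∧ ρh z < r₂ ∧ ρh z < ‖z - a‖ := by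
    intro z hz
    have h1 : r₁ < min ‖z - a‖ r₂ := lt_min hz h₂
    have h2 : min ‖z - a‖ r₂ ≤ r₂ := min_le_right _ _
    have h3 : min ‖z - a‖ r₂ ≤ ‖z - a‖ := min_le_left _ _
    refine ⟨by simp only [hρhdef]; linarith, by simp only [hρhdef]; linarith,
      by simp only [hρhdef]; linarith⟩
  set g : ℂ → ℂ := fun z => (2 * π * I : ℂ)⁻¹ • G (ρg z) z with hgdef
  set h : ℂ → ℂ := fun z => -((2 * π * I : ℂ)⁻¹ • G (ρh z) z) with hhdef
  -- invariance specialized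
  have Kg : ∀ z : ℂ, ‖z - a‖ < r₂ → ∀ ρ : ℝ, r₁ < ρ → ρ < r₂ → ‖z - a‖ < ρ →
      G ρ z = G (ρg z) z := by
    intro z hz ρ hρ1 hρ2 hρ3
    obtain ⟨hg1, hg2, hg3⟩ := hρg1 z hz
    rcases le_total ρ (ρg z) with hle | hle
    · rw [← K ρ (ρg z) hρ1 hle hg2 z ?_]
      intro hm
      rw [mem_diff, mem_ball, dist_eq_norm] at hm
      exact hm.2 hρ3
    · rw [K (ρg z) ρ hg1 hle hρ2 z ?_]
      intro hm
      rw [mem_diff, mem_ball, dist_eq_norm] at hm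
      exact hm.2 hg3
  have Kh : ∀ z : ℂ, r₁ < ‖z - a‖ → ∀ ρ : ℝ, r₁ < ρ → ρ < r₂ → ρ < ‖z - a‖ →
      G ρ z = G (ρh z) z := by
    intro z hz ρ hρ1 hρ2 hρ3
    obtain ⟨hh1, hh2, hh3⟩ := hρh1 z hz
    rcases le_total ρ (ρh z) with hle | hle
    · rw [← K ρ (ρh z) hρ1 hle hh2 z ?_]
      intro hm
      rw [mem_diff, mem_closedBall, dist_eq_norm] at hm
      exact absurd hm.1 (not_le.2 hh3)
    · rw [K (ρh z) ρ hh1 hle hρ2 z ?_]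
      intro hm
      rw [mem_diff, mem_closedBall, dist_eq_norm] at hm
      exact absurd hm.1 (not_le.2 hρ3)
  -- differentiability of g
  have hgdiff : DifferentiableOn ℂ g (ball a r₂) := by
    intro z hz
    rw [mem_ball, dist_eq_norm] at hz
    obtain ⟨hg1, hg2, hg3⟩ := hρg1 z hz
    set ρ := ρg z with hρdef
    have hdiff : DifferentiableAt ℂ (fun z' => (2 * π * I : ℂ)⁻¹ • G ρ z') z := by
      refine DifferentiableAt.fun_const_smul ?_ _
      exact diffAt_cauchy_kernel_integral (le_of_lt (lt_of_le_of_lt h₁ hg1))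
        (hfc.mono (hsphA ρ hg1 hg2)) (ne_of_lt hg3)
    have hU : {z' : ℂ | ‖z' - a‖ < ρ ∧ ‖z' - a‖ < r₂} ∈ nhds z := by
      have : IsOpen {z' : ℂ | ‖z' - a‖ < ρ ∧ ‖z' - a‖ < r₂} := by
        have e : {z' : ℂ | ‖z' - a‖ < ρ ∧ ‖z' - a‖ < r₂}
            = (fun z' : ℂ => ‖z' - a‖) ⁻¹' (Iio ρ ∩ Iio r₂) := by ext w; simp [Iio]
        rw [e]
        exact ((continuous_sub_right a).norm).isOpen_preimage _ (isOpen_Iio.inter isOpen_Iio)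
      exact this.mem_nhds ⟨hg3, hz⟩
    refine (hdiff.congr_of_eventuallyEq ?_).differentiableWithinAt
    filter_upwards [hU] with z' hz'
    simp only [hgdef]
    rw [Kg z' hz'.2 ρ hg1 hg2 hz'.1]
  -- differentiability of h
  have hhdiff : DifferentiableOn ℂ h {z : ℂ | r₁ < ‖z - a‖} := by
    intro z hz
    rw [mem_setOf_eq] at hz
    obtain ⟨hh1, hh2, hh3⟩ := hρh1 z hz
    set ρ := ρh z with hρdef
    have hdiff : DifferentiableAt ℂ (fun z' => -((2 * π * I : ℂ)⁻¹ • G ρ z')) z := by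
      refine DifferentiableAt.neg ?_
      refine DifferentiableAt.fun_const_smul ?_ _
      exact diffAt_cauchy_kernel_integral (le_of_lt (lt_of_le_of_lt h₁ hh1))
        (hfc.mono (hsphA ρ hh1 hh2)) (ne_of_gt hh3)
    have hU : {z' : ℂ | ρ < ‖z' - a‖} ∈ nhds z := by
      have : IsOpen {z' : ℂ | ρ < ‖z' - a‖} := by
        have e : {z' : ℂ | ρ < ‖z' - a‖} = (fun z' : ℂ => ‖z' - a‖) ⁻¹' Ioi ρ := by
          ext w; simp [Ioi]
        rw [e]
        exact ((continuous_sub_right a).norm).isOpen_preimage _ isOpen_Ioi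
      exact this.mem_nhds hh3
    refine (hdiff.congr_of_eventuallyEq ?_).differentiableWithinAt
    filter_upwards [hU] with z' hz'
    simp only [hhdef]
    rw [Kh z' (lt_trans hh1 hz') ρ hh1 hh2 hz']
  -- decomposition
  have hdecomp : ∀ z ∈ A, f z = g z + h z := by
    intro z hz
    obtain ⟨hz1, hz2⟩ := hz
    obtain ⟨hg1, hg2, hg3⟩ := hρg1 z hz2
    obtain ⟨hh1, hh2, hh3⟩ := hρh1 z hz1
    have hCF := CF z ⟨hz1, hz2⟩ (ρh z) (ρg z) hh1 hh3 hg3 hg2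
    simp only [hgdef, hhdef]
    rw [← sub_eq_add_neg, ← smul_sub, hCF, smul_smul,
      inv_mul_cancel₀ two_pi_I_ne_zero, one_smul]
  -- decay of h at infinity
  set ρ0 : ℝ := (r₁ + r₂) / 2 with hρ0def
  have hρ01 : r₁ < ρ0 := by simp only [hρ0def]; linarith
  have hρ02 : ρ0 < r₂ := by simp only [hρ0def]; linarith
  have hρ00 : 0 < ρ0 := lt_of_le_of_lt h₁ hρ01
  obtain ⟨C, hC⟩ := (isCompact_sphere a ρ0).exists_bound_of_continuousOn
    (hfc.mono (hsphA ρ0 hρ01 hρ02))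
  set M : ℝ := max C 0 with hMdef
  have hM0 : 0 ≤ M := le_max_right _ _
  have hMb : ∀ w ∈ sphere a ρ0, ‖f w‖ ≤ M := fun w hw => (hC w hw).trans (le_max_left _ _)
  have hdist : Tendsto (fun z : ℂ => ‖z - a‖) (Bornology.cobounded ℂ) atTop := by
    simpa [dist_eq_norm] using Metric.tendsto_dist_right_cobounded_atTop a
  have hnorm2pi : ‖(2 * π * I : ℂ)‖ = 2 * π := by
    simp [norm_mul, _root_.abs_of_nonneg Real.pi_nonneg]
  have htend : Tendsto h (Bornology.cobounded ℂ) (nhds 0) := by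
    have t1 : Tendsto (fun z : ℂ => ‖z - a‖ - ρ0) (Bornology.cobounded ℂ) atTop := by
      simpa [sub_eq_add_neg] using tendsto_atTop_add_const_right _ (-ρ0) hdist
    have t2 : Tendsto (fun z : ℂ => (‖z - a‖ - ρ0)⁻¹) (Bornology.cobounded ℂ) (nhds 0) :=
      t1.inv_tendsto_atTop
    have t3 : Tendsto (fun z : ℂ => ρ0 * M * (‖z - a‖ - ρ0)⁻¹)
        (Bornology.cobounded ℂ) (nhds 0) := by
      simpa using t2.const_mul (ρ0 * M)
    refine squeeze_zero_norm' ?_ t3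
    filter_upwards [hdist.eventually_gt_atTop r₂] with z hz
    have hz1 : r₁ < ‖z - a‖ := lt_trans h₂ hz
    have hzρ : ρ0 < ‖z - a‖ := lt_trans hρ02 hz
    have he : h z = -((2 * π * I : ℂ)⁻¹ • G ρ0 z) := by
      simp only [hhdef]
      rw [Kh z hz1 ρ0 hρ01 hρ02 hzρ]
    have hb : ∀ w ∈ sphere a ρ0, ‖(w - z)⁻¹ • f w‖ ≤ M * (‖z - a‖ - ρ0)⁻¹ := by
      intro w hw
      have hwa : ‖w - a‖ = ρ0 := by rwa [mem_sphere, dist_eq_norm] at hw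
      have hlow : ‖z - a‖ - ρ0 ≤ ‖w - z‖ := by
        have htri : ‖z - a‖ ≤ ‖w - z‖ + ‖w - a‖ := by
          have e : z - a = -(w - z) + (w - a) := by ring
          calc ‖z - a‖ = ‖-(w - z) + (w - a)‖ := by rw [← e]
            _ ≤ ‖-(w - z)‖ + ‖w - a‖ := norm_add_le _ _
            _ = ‖w - z‖ + ‖w - a‖ := by rw [norm_neg]
        linarith
      have hpos : 0 < ‖z - a‖ - ρ0 := by linarith
      rw [norm_smul, norm_inv]
      have : ‖w - z‖⁻¹ ≤ (‖z - a‖ - ρ0)⁻¹ := inv_anti₀ hpos hlow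
      calc ‖w - z‖⁻¹ * ‖f w‖ ≤ (‖z - a‖ - ρ0)⁻¹ * M :=
            mul_le_mul this (hMb w hw) (norm_nonneg _) (by positivity)
        _ = M * (‖z - a‖ - ρ0)⁻¹ := mul_comm _ _
    have hGb := circleIntegral.norm_integral_le_of_norm_le_const hρ00.le hb
    rw [he]
    rw [norm_neg, norm_smul, norm_inv, hnorm2pi]
    have hπ : 0 < 2 * π := by positivity
    calc (2 * π)⁻¹ * ‖G ρ0 z‖ ≤ (2 * π)⁻¹ * (2 * π * ρ0 * (M * (‖z - a‖ - ρ0)⁻¹)) := by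
          apply mul_le_mul_of_nonneg_left _ (by positivity)
          exact hGb
      _ = ρ0 * M * (‖z - a‖ - ρ0)⁻¹ := by
          generalize (‖z - a‖ - ρ0)⁻¹ = t
          field_simp
  refine ⟨g, h, ⟨hgdiff, hhdiff, htend, hdecomp⟩, ?_⟩
  -- uniqueness
  rintro g' h' ⟨hg', hh', hth', hd'⟩
  have hOuterOpen : IsOpen {w : ℂ | r₁ < ‖w - a‖} := by
    have e : {w : ℂ | r₁ < ‖w - a‖} = (fun w : ℂ => ‖w - a‖) ⁻¹' Ioi r₁ := by
      ext w; simp [Ioi]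
    rw [e]
    exact ((continuous_sub_right a).norm).isOpen_preimage _ isOpen_Ioi
  set F : ℂ → ℂ := fun z => if ‖z - a‖ < r₂ then g z - g' z else h' z - h z with hFdef
  have hFball : ∀ z ∈ ball a r₂, F z = g z - g' z := by
    intro z hz
    rw [mem_ball, dist_eq_norm] at hz
    simp only [hFdef]
    rw [if_pos hz]
  have hagree : ∀ z ∈ A, g z - g' z = h' z - h z := by
    intro z hz
    have e1 := hdecomp z hz
    have e2 := hd' z hz
    linear_combination e2 - e1
  have hFout : ∀ z : ℂ, r₁ < ‖z - a‖ → F z = h' z - h z := by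
    intro z hz
    by_cases hb : ‖z - a‖ < r₂
    · simp only [hFdef]
      rw [if_pos hb]
      exact hagree z ⟨hz, hb⟩
    · simp only [hFdef]
      rw [if_neg hb]
  have hFdiff : Differentiable ℂ F := by
    intro z
    by_cases hb : ‖z - a‖ < r₂
    · have hzb : z ∈ ball a r₂ := by rwa [mem_ball, dist_eq_norm]
      have hdz : DifferentiableAt ℂ (fun w => g w - g' w) z :=
        (hgdiff.differentiableAt (isOpen_ball.mem_nhds hzb)).sub
          (hg'.differentiableAt (isOpen_ball.mem_nhds hzb))
      refine hdz.congr_of_eventuallyEq ?_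
      filter_upwards [isOpen_ball.mem_nhds hzb] with w hw
      exact hFball w hw
    · have hz₁ : r₁ < ‖z - a‖ := lt_of_lt_of_le h₂ (not_lt.1 hb)
      have hdz : DifferentiableAt ℂ (fun w => h' w - h w) z :=
        (hh'.differentiableAt (hOuterOpen.mem_nhds hz₁)).sub
          (hhdiff.differentiableAt (hOuterOpen.mem_nhds hz₁))
      refine hdz.congr_of_eventuallyEq ?_
      filter_upwards [hOuterOpen.mem_nhds hz₁] with w hw
      exact hFout w hw
  have hFtend : Tendsto F (Bornology.cobounded ℂ) (nhds 0) := by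
    have hsub : Tendsto (fun z => h' z - h z) (Bornology.cobounded ℂ) (nhds 0) := by
      simpa using hth'.sub htend
    refine hsub.congr' ?_
    filter_upwards [hdist.eventually_gt_atTop r₁] with z hz
    exact (hFout z hz).symm
  have hF0 : ∀ z : ℂ, F z = 0 := by
    intro z
    refine hFdiff.apply_eq_of_tendsto_cocompact z ?_
    rwa [← Metric.cobounded_eq_cocompact]
  constructor
  · intro z hz
    have := hF0 z
    rw [hFball z hz] at this
    exact sub_eq_zero.1 this
  · intro z hz
    have := hF0 z
    rw [hFout z hz] at this
    exact (sub_eq_zero.1 this).symm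

end LaurentMain
end
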